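/- arXiv:1102.0921 — 8 statements merged into one kernel-verified Lean document; each statement's English description precedes it below -/
import Mathlib

section
/- Let r, s ∈ ℝ. In the ring of formal power series ℝ[[X]], let g = (1 + rX + sX²)⁻¹ and f = X·(1 + rX + sX²)⁻¹, and for each n ∈ ℕ define the polynomial p_n(X) = ∑_{k=0}^{n} ([Xⁿ](g·fᵏ))·Xᵏ ∈ ℝ[X] (so that the Riordan array (g,f) is the coefficient array of the p_n). Then p_0 = 1, p_1 = X − r, and for all n ≥ 1, p_{n+1} = (X − r)·p_n − s·p_{n−1}; in particular each p_n is monic of degree n and the family satisfies a constant-coefficient three-term recurrence. -/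
open PowerSeries Polynomial

/-- The Riordan array `(1/(1+rx+sx²), x/(1+rx+sx²))` is the coefficient array of a
family of monic orthogonal polynomials satisfying a constant-coefficient
three-term recurrence. -/
theorem riordan_constant_tridiagonal_orthogonal (r s : ℝ)
    (g f : PowerSeries ℝ)
    (hg : g = (1 + PowerSeries.C r * PowerSeries.X + PowerSeries.C s * PowerSeries.X ^ 2)⁻¹)
    (hf : f = PowerSeries.X *
      (1 + PowerSeries.C r * PowerSeries.X + PowerSeries.C s * PowerSeries.X ^ 2)⁻¹)
    (p : ℕ → Polynomial ℝ)
    (hp : ∀ n, p n = ∑ k ∈ Finset.range (n + 1),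
      Polynomial.C (PowerSeries.coeff n (g * f ^ k)) * Polynomial.X ^ k) :
    p 0 = 1 ∧
    p 1 = Polynomial.X - Polynomial.C r ∧
    (∀ n, 1 ≤ n →
      p (n + 1) = (Polynomial.X - Polynomial.C r) * p n - Polynomial.C s * p (n - 1)) ∧
    (∀ n, (p n).Monic ∧ (p n).natDegree = n) := by
  set u : PowerSeries ℝ :=
    1 + PowerSeries.C r * PowerSeries.X + PowerSeries.C s * PowerSeries.X ^ 2 with hu
  have hu0 : PowerSeries.constantCoeff u = 1 := by simp [hu]
  have huu : u * u⁻¹ = 1 := PowerSeries.mul_inv_cancel u (by rw [hu0]; norm_num)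
  have hug : u * g = 1 := by rw [hg]; exact huu
  have hfg : f = PowerSeries.X * g := by rw [hf, hg]
  have huf : u * f = PowerSeries.X := by
    rw [hfg, show u * (PowerSeries.X * g) = PowerSeries.X * (u * g) by ring, hug, mul_one]
  have hg0 : PowerSeries.constantCoeff g = 1 := by
    have := congrArg (PowerSeries.constantCoeff) hug
    simpa [hu0] using this
  -- coefficient expansion of u * h
  have hcoeff : ∀ (h : PowerSeries ℝ) (n : ℕ),
      PowerSeries.coeff (n + 2) (u * h) = PowerSeries.coeff (n + 2) h
        + r * PowerSeries.coeff (n + 1) h + s * PowerSeries.coeff n h := by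
    intro h n
    have he : u * h = h + PowerSeries.C r * (PowerSeries.X * h)
        + PowerSeries.C s * (PowerSeries.X * (PowerSeries.X * h)) := by rw [hu]; ring
    rw [he]
    simp [PowerSeries.coeff_C_mul, PowerSeries.coeff_succ_X_mul]
  -- key recurrences on coefficients
  have key0 : ∀ n : ℕ, PowerSeries.coeff (n + 2) g
      = - (r * PowerSeries.coeff (n + 1) g) - s * PowerSeries.coeff n g := by
    intro n
    have h1 := hcoeff g n
    rw [hug] at h1
    simp only [PowerSeries.coeff_one] at h1
    simp only [Nat.add_eq_zero, OfNat.ofNat_ne_zero, and_false, if_false] at h1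
    linarith
  have key : ∀ (n k : ℕ), PowerSeries.coeff (n + 2) (g * f ^ (k + 1))
      = PowerSeries.coeff (n + 1) (g * f ^ k)
        - r * PowerSeries.coeff (n + 1) (g * f ^ (k + 1))
        - s * PowerSeries.coeff n (g * f ^ (k + 1)) := by
    intro n k
    have hmul : u * (g * f ^ (k + 1)) = PowerSeries.X * (g * f ^ k) := by
      have : u * (g * f ^ (k + 1)) = (u * f) * (g * f ^ k) := by ring
      rw [this, huf]
    have h1 := hcoeff (g * f ^ (k + 1)) n
    rw [hmul, PowerSeries.coeff_succ_X_mul] at h1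
    linarith
  -- vanishing above the diagonal
  have vanish : ∀ (n k : ℕ), n < k → PowerSeries.coeff n (g * f ^ k) = 0 := by
    intro n k hnk
    have he : g * f ^ k = g ^ (k + 1) * PowerSeries.X ^ k := by
      rw [hfg]; rw [mul_pow]; ring
    rw [he, PowerSeries.coeff_mul_X_pow']
    simp [Nat.not_le.mpr hnk]
  -- coefficients of p n
  have pc : ∀ n k, (p n).coeff k = PowerSeries.coeff n (g * f ^ k) := by
    intro n k
    rw [hp n, Polynomial.finset_sum_coeff]
    simp only [Polynomial.coeff_C_mul, Polynomial.coeff_X_pow, mul_ite, mul_one, mul_zero]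
    rw [Finset.sum_ite_eq (Finset.range (n + 1)) k]
    by_cases hk : k ≤ n
    · simp [Finset.mem_range, Nat.lt_succ_of_le hk]
    · rw [if_neg (by simp [Finset.mem_range]; omega), vanish n k (by omega)]
  -- the recurrence in its clean form
  have recur : ∀ n, p (n + 2) = (Polynomial.X - Polynomial.C r) * p (n + 1)
      - Polynomial.C s * p n := by
    intro n
    ext k
    rw [pc]
    have hRHS : ((Polynomial.X - Polynomial.C r) * p (n + 1)
        - Polynomial.C s * p n).coeff k
        = (Polynomial.X * p (n + 1)).coeff k - r * (p (n + 1)).coeff k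
          - s * (p n).coeff k := by
      simp [sub_mul, Polynomial.coeff_sub, Polynomial.coeff_C_mul]
    rw [hRHS]
    cases k with
    | zero =>
        have hx : (Polynomial.X * p (n + 1)).coeff 0 = 0 := by
          simp [Polynomial.mul_coeff_zero]
        rw [hx, pc, pc]
        simp only [pow_zero, mul_one]
        have := key0 n
        linarith
    | succ j =>
        rw [Polynomial.coeff_X_mul, pc, pc, pc]
        exact key n j
  -- p 0
  have hp0 : p 0 = 1 := by
    rw [hp 0]
    simp [PowerSeries.coeff_zero_eq_constantCoeff, hg0]
  -- p 1
  have c1g : PowerSeries.coeff 1 g = -r := by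
    have he : u * g = g + PowerSeries.C r * (PowerSeries.X * g)
        + PowerSeries.C s * (PowerSeries.X * (PowerSeries.X * g)) := by rw [hu]; ring
    have h1 := congrArg (PowerSeries.coeff 1) hug
    rw [he] at h1
    simp only [map_add, PowerSeries.coeff_C_mul, PowerSeries.coeff_one] at h1
    have hXg : PowerSeries.coeff 1 (PowerSeries.X * g)
        = PowerSeries.coeff 0 g := PowerSeries.coeff_succ_X_mul 0 g
    have hXXg : PowerSeries.coeff 1 (PowerSeries.X * (PowerSeries.X * g))
        = PowerSeries.coeff 0 (PowerSeries.X * g) := PowerSeries.coeff_succ_X_mul 0 _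
    have hXg0 : PowerSeries.coeff 0 (PowerSeries.X * g) = 0 := by
      simp [PowerSeries.coeff_zero_eq_constantCoeff]
    rw [hXg, hXXg, hXg0] at h1
    simp only [PowerSeries.coeff_zero_eq_constantCoeff, hg0, mul_one, mul_zero, add_zero] at h1
    norm_num at h1
    linarith
  have c1gf : PowerSeries.coeff 1 (g * f) = 1 := by
    have he : g * f = PowerSeries.X * (g * g) := by rw [hfg]; ring
    rw [he, PowerSeries.coeff_succ_X_mul]
    simp [PowerSeries.coeff_zero_eq_constantCoeff, hg0]
  have hp1 : p 1 = Polynomial.X - Polynomial.C r := by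
    rw [hp 1]
    rw [Finset.sum_range_succ, Finset.sum_range_one]
    simp only [pow_zero, mul_one, pow_one, c1gf]
    rw [c1g]
    simp only [map_neg, map_one, one_mul]
    ring
  refine ⟨hp0, hp1, ?_, ?_⟩
  · intro n hn
    rcases n with _ | m
    · omega
    · simpa using recur m
  · intro n
    induction n using Nat.strong_induction_on with
    | _ n ih =>
      match n with
      | 0 => exact ⟨by rw [hp0]; exact monic_one, by simp [hp0]⟩
      | 1 => exact ⟨by rw [hp1]; exact monic_X_sub_C r, by rw [hp1]; exact natDegree_X_sub_C r⟩
      | (m + 2) =>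
        obtain ⟨h1m, h1d⟩ := ih (m + 1) (by omega)
        obtain ⟨h0m, h0d⟩ := ih m (by omega)
        have hmul : ((Polynomial.X - Polynomial.C r) * p (m + 1)).Monic :=
          (monic_X_sub_C r).mul h1m
        have hdeg : ((Polynomial.X - Polynomial.C r) * p (m + 1)).natDegree = m + 2 := by
          rw [Polynomial.natDegree_mul (monic_X_sub_C r).ne_zero h1m.ne_zero,
            natDegree_X_sub_C, h1d]
          omega
        have hlt : (Polynomial.C s * p m).natDegree
            < ((Polynomial.X - Polynomial.C r) * p (m + 1)).natDegree := by
          rw [hdeg]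
          exact lt_of_le_of_lt (le_trans (Polynomial.natDegree_C_mul_le s (p m))
            (le_of_eq h0d)) (by omega)
        constructor
        · rw [recur m, sub_eq_add_neg]
          exact hmul.add_of_left (by
            rw [Polynomial.degree_neg]
            exact Polynomial.degree_lt_degree hlt)
        · rw [recur m, Polynomial.natDegree_sub_eq_left_of_natDegree_lt hlt, hdeg]
end

section
/- Let r ∈ ℝ and s ∈ ℝ with s > 0. In ℝ[[X]] let g = (1 + rX + sX²)⁻¹ and f = X·(1 + rX + sX²)⁻¹, and define p_n(X) = ∑_{k=0}^{n} ([Xⁿ](g·fᵏ))·Xᵏ ∈ ℝ[X]. Then for every n ∈ ℕ and every x ∈ ℝ, p_n(x) = (√s)ⁿ · U_n((x − r)/(2√s)), where U_n is the n-th Chebyshev polynomial of the second kind. -/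
/-- The polynomials whose coefficient array is the Riordan array
`(1/(1+rx+sx²), x/(1+rx+sx²))` are the modified Chebyshev polynomials of the second
kind `(√s)ⁿ Uₙ((x−r)/(2√s))`. -/
theorem riordan_modified_chebyshevU (r s : ℝ) (hs : 0 < s)
    (g f : PowerSeries ℝ)
    (hg : g = (1 + PowerSeries.C r * PowerSeries.X + PowerSeries.C s * PowerSeries.X ^ 2)⁻¹)
    (hf : f = PowerSeries.X *
      (1 + PowerSeries.C r * PowerSeries.X + PowerSeries.C s * PowerSeries.X ^ 2)⁻¹)
    (p : ℕ → Polynomial ℝ)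
    (hp : ∀ n, p n = ∑ k ∈ Finset.range (n + 1),
      Polynomial.C (PowerSeries.coeff n (g * f ^ k)) * Polynomial.X ^ k) :
    ∀ (n : ℕ) (x : ℝ),
      (p n).eval x =
        Real.sqrt s ^ n *
          (Polynomial.Chebyshev.U ℝ (n : ℤ)).eval ((x - r) / (2 * Real.sqrt s)) := by
  intro n x
  set q : PowerSeries ℝ :=
    1 + PowerSeries.C r * PowerSeries.X + PowerSeries.C s * PowerSeries.X ^ 2 with hq
  have hq0 : PowerSeries.constantCoeff q ≠ 0 := by simp [hq]
  have hgq : q * g = 1 := by rw [hg]; exact PowerSeries.mul_inv_cancel q hq0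
  have hfxg : f = PowerSeries.X * g := by rw [hf, hg]
  set a : ℕ → ℕ → ℝ := fun n k => PowerSeries.coeff n (g * f ^ k) with ha
  have hvan : ∀ n k, n < k → a n k = 0 := by
    intro n k h
    have hx : g * f ^ k = PowerSeries.X ^ k * (g * g ^ k) := by
      rw [hfxg, mul_pow]; ring
    simp only [ha, hx, PowerSeries.coeff_X_pow_mul']
    rw [if_neg (Nat.not_le.mpr h)]
  -- coefficient of q * h
  have hqcoeff : ∀ (h : PowerSeries ℝ) (n : ℕ),
      PowerSeries.coeff (n+2) (q * h) =
      PowerSeries.coeff (n+2) h + r * PowerSeries.coeff (n+1) h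
        + s * PowerSeries.coeff n h := by
    intro h n
    have hx : q * h = h + PowerSeries.C r * (PowerSeries.X * h)
        + PowerSeries.C s * (PowerSeries.X * (PowerSeries.X * h)) := by
      rw [hq]; ring
    rw [hx]
    simp [PowerSeries.coeff_succ_X_mul]
  have hrec : ∀ n k, a (n+2) (k+1) = a (n+1) k - r * a (n+1) (k+1) - s * a n (k+1) := by
    intro n k
    have h1 : q * (g * f ^ (k+1)) = PowerSeries.X * (g * f ^ k) := by
      calc q * (g * f ^ (k+1)) = (q * g) * (f * f ^ k) := by ring
      _ = PowerSeries.X * (g * f ^ k) := by rw [hgq, hfxg]; ring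
    have h2 := congrArg (PowerSeries.coeff (n+2)) h1
    rw [hqcoeff, PowerSeries.coeff_succ_X_mul] at h2
    simp only [ha] at h2 ⊢
    linarith
  have hrec0 : ∀ n, a (n+2) 0 = -(r * a (n+1) 0) - s * a n 0 := by
    intro n
    have h1 : q * (g * f ^ 0) = 1 := by rw [pow_zero, mul_one, hgq]
    have h2 := congrArg (PowerSeries.coeff (n+2)) h1
    rw [hqcoeff] at h2
    simp only [PowerSeries.coeff_one] at h2
    rw [if_neg (by omega)] at h2
    simp only [ha] at h2 ⊢
    linarith
  -- base coefficients
  have hcg0 : PowerSeries.coeff 0 g = 1 := by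
    have h2 := congrArg (PowerSeries.constantCoeff) hgq
    simp only [map_mul, map_add, map_one, map_pow, hq, PowerSeries.constantCoeff_X,
      PowerSeries.constantCoeff_C, mul_zero, zero_pow, add_zero, one_mul,
      PowerSeries.coeff_zero_eq_constantCoeff] at h2 ⊢
    simpa using h2
  have hgexp : g = 1 - PowerSeries.C r * (PowerSeries.X * g)
      - PowerSeries.C s * (PowerSeries.X ^ 2 * g) := by
    have h2 : q * g = 1 := hgq
    rw [hq] at h2
    linear_combination h2
  have ha00 : a 0 0 = 1 := by
    simpa [ha] using hcg0
  have ha10 : a 1 0 = -r := by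
    have h2 := congrArg (PowerSeries.coeff 1) hgexp
    rw [show (1:ℕ) = 0 + 1 from rfl] at h2
    simp only [map_sub, PowerSeries.coeff_C_mul, PowerSeries.coeff_succ_X_mul,
      PowerSeries.coeff_X_pow_mul', PowerSeries.coeff_one, PowerSeries.coeff_zero_eq_constantCoeff,
      ← PowerSeries.coeff_zero_eq_constantCoeff, hcg0] at h2
    norm_num at h2
    simp only [ha, pow_zero, mul_one]
    rw [show (1:ℕ) = 0 + 1 from rfl]
    linarith
  have ha11 : a 1 1 = 1 := by
    have hx : g * f ^ 1 = PowerSeries.X * (g * g) := by rw [pow_one, hfxg]; ring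
    simp only [ha, hx]
    rw [show (1:ℕ) = 0 + 1 from rfl, PowerSeries.coeff_succ_X_mul]
    rw [PowerSeries.coeff_zero_eq_constantCoeff, map_mul]
    rw [← PowerSeries.coeff_zero_eq_constantCoeff, hcg0]
    norm_num
  -- the evaluated polynomials
  set P : ℕ → ℝ := fun n => ∑ k ∈ Finset.range (n+1), a n k * x ^ k with hPdef
  have hP : ∀ n, (p n).eval x = P n := by
    intro n
    rw [hp n]
    simp [hPdef, ha, Polynomial.eval_finset_sum]
  have hP0 : P 0 = 1 := by simp [hPdef, ha00]
  have hP1 : P 1 = x - r := by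
    simp [hPdef, Finset.sum_range_succ, ha10, ha11]
    ring
  have key : ∀ n, P (n+2) = (x - r) * P (n+1) - s * P n := by
    intro n
    have h1 : P (n+2) = (∑ k ∈ Finset.range (n+2), a (n+2) (k+1) * x ^ (k+1))
        + a (n+2) 0 * x ^ 0 := Finset.sum_range_succ' _ _
    have hS2 : (∑ k ∈ Finset.range (n+2), a (n+1) (k+1) * x ^ (k+1)) + a (n+1) 0 * x ^ 0
        = P (n+1) := by
      rw [← Finset.sum_range_succ' (fun k => a (n+1) k * x ^ k) (n+2)]
      rw [Finset.sum_range_succ]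
      rw [hvan (n+1) (n+2) (by omega)]
      simp [hPdef]
    have hS3 : (∑ k ∈ Finset.range (n+2), a n (k+1) * x ^ (k+1)) + a n 0 * x ^ 0
        = P n := by
      rw [← Finset.sum_range_succ' (fun k => a n k * x ^ k) (n+2)]
      rw [Finset.sum_range_succ, Finset.sum_range_succ]
      rw [hvan n (n+2) (by omega), hvan n (n+1) (by omega)]
      simp [hPdef]
    have hS1 : (∑ k ∈ Finset.range (n+2), a (n+1) k * x ^ (k+1)) = x * P (n+1) := by
      rw [hPdef, Finset.mul_sum]
      exact Finset.sum_congr rfl fun k _ => by ring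
    rw [h1, hrec0]
    have hsplit : (∑ k ∈ Finset.range (n+2), a (n+2) (k+1) * x ^ (k+1))
        = (∑ k ∈ Finset.range (n+2), a (n+1) k * x ^ (k+1))
          - r * (∑ k ∈ Finset.range (n+2), a (n+1) (k+1) * x ^ (k+1))
          - s * (∑ k ∈ Finset.range (n+2), a n (k+1) * x ^ (k+1)) := by
      rw [Finset.mul_sum, Finset.mul_sum, ← Finset.sum_sub_distrib, ← Finset.sum_sub_distrib]
      exact Finset.sum_congr rfl fun k _ => by rw [hrec]; ring
    rw [hsplit, hS1]
    linear_combination (-r) * hS2 + (-s) * hS3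
  -- right-hand side
  rw [hP]
  set t : ℝ := Real.sqrt s with htdef
  have ht2 : t ^ 2 = s := Real.sq_sqrt hs.le
  have ht0 : t ≠ 0 := by positivity
  set y : ℝ := (x - r) / (2 * t) with hydef
  have hyt : 2 * t * y = x - r := by
    rw [hydef]; field_simp
  induction n using Nat.twoStepInduction with
  | zero =>
      simp [hP0, Polynomial.Chebyshev.U_zero]
  | one =>
      rw [hP1]
      simp only [Nat.cast_one, Polynomial.Chebyshev.U_one, Polynomial.eval_mul,
        Polynomial.eval_ofNat, Polynomial.eval_X, pow_one]
      nlinarith [hyt]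
  | more n ih1 ih2 =>
      have hcast : ((n + 2 : ℕ) : ℤ) = (n : ℤ) + 2 := by push_cast; ring
      rw [key n, ih1, ih2, hcast, Polynomial.Chebyshev.U_add_two]
      have h1 : ((n + 1 : ℕ) : ℤ) = (n : ℤ) + 1 := by push_cast; ring
      rw [h1] at *
      simp only [Polynomial.eval_sub, Polynomial.eval_mul, Polynomial.eval_ofNat,
        Polynomial.eval_X]
      set u1 := (Polynomial.Chebyshev.U ℝ ((n:ℤ) + 1)).eval y
      set u0 := (Polynomial.Chebyshev.U ℝ (n:ℤ)).eval y
      have : (x - r) = 2 * t * y := hyt.symm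
      rw [this, ← ht2]
      ring
end

section
/- Let a, b, k, λ, μ ∈ ℝ. In ℝ[[X]] let f₁ = X·(1 + aX + bX²)⁻¹. Then substituting f₁ into X·(1 + kX)⁻¹ gives X·(1 + (a+k)X + bX²)⁻¹, and ((1 + λX + μX²)·(1 + aX + bX²)⁻¹)·((1 + kX)⁻¹ ∘ f₁) = (1 + λX + μX²)·(1 + (a+k)X + bX²)⁻¹. Equivalently, in the Riordan group, ((1+λx+μx²)/(1+ax+bx²), x/(1+ax+bx²)) · (1/(1+kx), x/(1+kx)) = ((1+λx+μx²)/(1+(a+k)x+bx²), x/(1+(a+k)x+bx²)). -/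
/-- Substitution (composition) of formal power series: `psComp h u = h ∘ u`,
the series obtained by substituting `u` (with zero constant term) into `h`. -/
noncomputable def psComp (h u : PowerSeries ℝ) : PowerSeries ℝ :=
  PowerSeries.mk fun n =>
    ∑ k ∈ Finset.range (n + 1), PowerSeries.coeff k h * PowerSeries.coeff n (u ^ k)

open PowerSeries

lemma geom_coeff (k : ℝ) (j : ℕ) :
    coeff j (1 + C k * X : PowerSeries ℝ)⁻¹ = (-k) ^ j := by
  have h0 : constantCoeff (1 + C k * X) ≠ 0 := by simp
  have : (1 + C k * X : PowerSeries ℝ)⁻¹ = PowerSeries.mk fun j => (-k) ^ j := by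
    rw [PowerSeries.inv_eq_iff_mul_eq_one h0]
    ext n
    cases n with
    | zero => simp
    | succ n =>
      rw [mul_add, mul_one, map_add, mul_comm _ (C k * X), mul_assoc, coeff_C_mul,
        coeff_succ_X_mul, coeff_mk, coeff_mk]
      simp [coeff_one, pow_succ]
      ring
  rw [this, coeff_mk]

lemma coeff_vanish (u : PowerSeries ℝ) (hu : constantCoeff u = 0) {n j : ℕ} (h : n < j) :
    coeff n (u ^ j) = 0 := by
  have hdvd : (X : PowerSeries ℝ) ^ j ∣ u ^ j := pow_dvd_pow_of_dvd (X_dvd_iff.2 hu) j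
  obtain ⟨c, hc⟩ := hdvd
  rw [hc, PowerSeries.coeff_X_pow_mul']
  simp [Nat.not_le_of_lt h]

lemma psComp_geom (k : ℝ) (u : PowerSeries ℝ) (hu : constantCoeff u = 0) :
    psComp (1 + C k * X)⁻¹ u = (1 + C k * u)⁻¹ := by
  have h0 : constantCoeff (1 + C k * u) ≠ 0 := by simp [hu]
  ext n
  set r : PowerSeries ℝ := C (-k) * u with hr
  have hgeom : (∑ j ∈ Finset.range (n+1), r ^ j) * (1 + C k * u) = 1 - r ^ (n+1) := by
    have := geom_sum_mul r (n+1)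
    have h1 : (1 : PowerSeries ℝ) + C k * u = 1 - r := by
      rw [hr, map_neg]; ring
    rw [h1]
    linear_combination -this
  have hT : (∑ j ∈ Finset.range (n+1), r ^ j) = (1 - r ^ (n+1)) * (1 + C k * u)⁻¹ := by
    rw [PowerSeries.eq_mul_inv_iff_mul_eq h0]; exact hgeom
  have hcoeffr : coeff n (r ^ (n+1)) = 0 := by
    apply coeff_vanish _ _ (Nat.lt_succ_self n)
    simp [hr, hu]
  have key : coeff n ((1 + C k * u)⁻¹) = coeff n (∑ j ∈ Finset.range (n+1), r ^ j) := by
    have hexp : (1 - r ^ (n+1)) * (1 + C k * u)⁻¹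
        = (1 + C k * u)⁻¹ - (1 + C k * u)⁻¹ * r ^ (n+1) := by ring
    rw [hT, hexp, map_sub]
    have : coeff n ((1 + C k * u)⁻¹ * r ^ (n+1)) = 0 := by
      have hdvd : (X : PowerSeries ℝ) ^ (n+1) ∣ (1 + C k * u)⁻¹ * r ^ (n+1) := by
        apply Dvd.dvd.mul_left
        apply pow_dvd_pow_of_dvd
        rw [X_dvd_iff]; simp [hr, hu]
      obtain ⟨c, hc⟩ := hdvd
      rw [hc, PowerSeries.coeff_X_pow_mul']
      simp
    rw [this, sub_zero]
  rw [psComp, coeff_mk, key, map_sum]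
  apply Finset.sum_congr rfl
  intro j hj
  rw [geom_coeff, hr, mul_pow, ← map_pow, coeff_C_mul]

lemma psComp_X_geom (k : ℝ) (u : PowerSeries ℝ) (hu : constantCoeff u = 0) :
    psComp (X * (1 + C k * X)⁻¹) u = u * (1 + C k * u)⁻¹ := by
  have h0 : constantCoeff (1 + C k * u) ≠ 0 := by simp [hu]
  ext n
  set r : PowerSeries ℝ := C (-k) * u with hr
  -- target coeff: coeff n (u * (1+ku)⁻¹) = coeff n (u * ∑_{j≤n} r^j)
  have hgeom : (∑ j ∈ Finset.range (n+1), r ^ j) * (1 + C k * u) = 1 - r ^ (n+1) := by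
    have := geom_sum_mul r (n+1)
    have h1 : (1 : PowerSeries ℝ) + C k * u = 1 - r := by
      rw [hr, map_neg]; ring
    rw [h1]
    linear_combination -this
  have hT : (∑ j ∈ Finset.range (n+1), r ^ j) = (1 - r ^ (n+1)) * (1 + C k * u)⁻¹ := by
    rw [PowerSeries.eq_mul_inv_iff_mul_eq h0]; exact hgeom
  have key : coeff n (u * (1 + C k * u)⁻¹)
      = coeff n (u * ∑ j ∈ Finset.range (n+1), r ^ j) := by
    have hexp : u * ((1 - r ^ (n+1)) * (1 + C k * u)⁻¹)
        = u * (1 + C k * u)⁻¹ - u * (1 + C k * u)⁻¹ * r ^ (n+1) := by ring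
    rw [hT, hexp, map_sub]
    have : coeff n (u * (1 + C k * u)⁻¹ * r ^ (n+1)) = 0 := by
      have hdvd : (X : PowerSeries ℝ) ^ (n+1) ∣ u * (1 + C k * u)⁻¹ * r ^ (n+1) := by
        apply Dvd.dvd.mul_left
        apply pow_dvd_pow_of_dvd
        rw [X_dvd_iff]; simp [hr, hu]
      obtain ⟨c, hc⟩ := hdvd
      rw [hc, PowerSeries.coeff_X_pow_mul']
      simp
    rw [this, sub_zero]
  rw [psComp, coeff_mk, key, Finset.mul_sum, map_sum]
  -- LHS sum: ∑_{j∈range(n+1)} coeff j (X*(1+kX)⁻¹) * coeff n (u^j)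
  -- = ∑_{j∈range(n+1)} coeff n (u * r^j)?  reindexing
  have lhs_eq : ∑ j ∈ Finset.range (n+1), coeff j (X * (1 + C k * X)⁻¹) * coeff n (u ^ j)
      = ∑ j ∈ Finset.range n, (-k) ^ j * coeff n (u ^ (j+1)) := by
    rw [Finset.sum_range_succ']
    simp only [coeff_succ_X_mul, geom_coeff, coeff_zero_X_mul, zero_mul, add_zero, pow_zero]
  rw [lhs_eq]
  have rhs_eq : ∑ j ∈ Finset.range (n+1), coeff n (u * r ^ j)
      = ∑ j ∈ Finset.range (n+1), (-k) ^ j * coeff n (u ^ (j+1)) := by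
    apply Finset.sum_congr rfl
    intro j hj
    have : u * r ^ j = C ((-k) ^ j) * u ^ (j+1) := by
      rw [hr, mul_pow, ← map_pow]; ring
    rw [this, coeff_C_mul]
  rw [rhs_eq, Finset.sum_range_succ]
  have : coeff n (u ^ (n+1)) = 0 := coeff_vanish u hu (Nat.lt_succ_self n)
  rw [this, mul_zero, add_zero]

/-- In the Riordan group,
`((1+λx+μx²)/(1+ax+bx²), x/(1+ax+bx²)) · (1/(1+kx), x/(1+kx))
  = ((1+λx+μx²)/(1+(a+k)x+bx²), x/(1+(a+k)x+bx²))`. -/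
theorem riordan_product_shift (a b k l m : ℝ)
    (f₁ : PowerSeries ℝ)
    (hf₁ : f₁ = PowerSeries.X *
      (1 + PowerSeries.C a * PowerSeries.X + PowerSeries.C b * PowerSeries.X ^ 2)⁻¹) :
    psComp (PowerSeries.X * (1 + PowerSeries.C k * PowerSeries.X)⁻¹) f₁ =
      PowerSeries.X * (1 + PowerSeries.C (a + k) * PowerSeries.X +
        PowerSeries.C b * PowerSeries.X ^ 2)⁻¹ ∧
    ((1 + PowerSeries.C l * PowerSeries.X + PowerSeries.C m * PowerSeries.X ^ 2) *
        (1 + PowerSeries.C a * PowerSeries.X + PowerSeries.C b * PowerSeries.X ^ 2)⁻¹) *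
      psComp (1 + PowerSeries.C k * PowerSeries.X)⁻¹ f₁ =
      (1 + PowerSeries.C l * PowerSeries.X + PowerSeries.C m * PowerSeries.X ^ 2) *
        (1 + PowerSeries.C (a + k) * PowerSeries.X +
          PowerSeries.C b * PowerSeries.X ^ 2)⁻¹ := by
  set D : PowerSeries ℝ := 1 + C a * X + C b * X ^ 2 with hDdef
  set E : PowerSeries ℝ := 1 + C (a + k) * X + C b * X ^ 2 with hEdef
  have hD : constantCoeff D ≠ 0 := by simp [hDdef]
  have hE : constantCoeff E ≠ 0 := by simp [hEdef]
  have hu : constantCoeff f₁ = 0 := by rw [hf₁]; simp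
  have h0 : constantCoeff (1 + C k * f₁) ≠ 0 := by simp [hu]
  have hshift : 1 + C k * f₁ = E * D⁻¹ := by
    have hE' : E = D + C k * X := by
      rw [hEdef, hDdef, map_add]; ring
    rw [hE', add_mul, hf₁]
    rw [PowerSeries.mul_inv_cancel _ hD]
    ring
  have hinv : (1 + C k * f₁)⁻¹ = D * E⁻¹ := by
    have h0' : constantCoeff (E * D⁻¹) ≠ 0 := hshift ▸ h0
    rw [hshift, PowerSeries.inv_eq_iff_mul_eq_one h0']
    calc D * E⁻¹ * (E * D⁻¹) = D * (E⁻¹ * E) * D⁻¹ := by ring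
      _ = 1 := by rw [PowerSeries.inv_mul_cancel _ hE, mul_one,
            PowerSeries.mul_inv_cancel _ hD]
  constructor
  · rw [psComp_X_geom k f₁ hu, hinv, hf₁]
    calc X * D⁻¹ * (D * E⁻¹) = X * (D⁻¹ * D) * E⁻¹ := by ring
      _ = X * E⁻¹ := by rw [PowerSeries.inv_mul_cancel _ hD, mul_one]
  · rw [psComp_geom k f₁ hu, hinv]
    set N : PowerSeries ℝ := 1 + C l * X + C m * X ^ 2
    calc N * D⁻¹ * (D * E⁻¹) = N * (D⁻¹ * D) * E⁻¹ := by ring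
      _ = N * E⁻¹ := by rw [PowerSeries.inv_mul_cancel _ hD, mul_one]
end

section
/- Let a, b, a₁, b₁ ∈ ℝ with b ≠ 0 and b₁ ≠ 0. Let f ∈ ℝ[[X]] have constant term 0 and be the compositional inverse of f̄ = X·(1 + aX + bX²)⁻¹ (i.e., f̄∘f = X), and set g = (1 − a₁X − b₁X·f)⁻¹. Let h = (g∘f̄)⁻¹, so that (h, f̄) = (g,f)⁻¹ in the Riordan group, and define p_n(X) = ∑_{k=0}^{n} ([Xⁿ](h·f̄ᵏ))·Xᵏ ∈ ℝ[X]. Then p_0 = 1, p_1 = X − a₁, p_2 = (X − a)·p_1 − b₁·p_0, and p_{n+1} = (X − a)·p_n − b·p_{n−1} for all n ≥ 2. (That is, if the Riordan array L = (g,f) has tridiagonal production matrix with diagonal a₁,a,a,..., subdiagonal b₁,b,b,..., then L⁻¹ is the coefficient array of a family of monic orthogonal polynomials satisfying this three-term recurrence.) -/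
open PowerSeries Finset

namespace PsCompAux

variable {u : PowerSeries ℝ} (hu : constantCoeff u = 0)

lemma coeff_pow_zero (hu : constantCoeff u = 0) {i p : ℕ} (hp : p < i) :
    coeff p (u ^ i) = 0 := by
  obtain ⟨w, rfl⟩ := PowerSeries.X_dvd_iff.mpr hu
  rw [mul_pow, PowerSeries.coeff_X_pow_mul', if_neg (by omega)]

lemma coeff_psComp (h : PowerSeries ℝ) (n : ℕ) :
    coeff n (psComp h u) = ∑ k ∈ range (n + 1), coeff k h * coeff n (u ^ k) := by
  simp [psComp]

/-- Key: coeff of `eval₂` of a truncation. -/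
lemma coeff_eval₂_trunc (hu : constantCoeff u = 0) (v : PowerSeries ℝ) {n p : ℕ} (hp : p ≤ n) :
    coeff p (Polynomial.eval₂ (C) u (trunc (n + 1) v)) = coeff p (psComp v u) := by
  rw [eval₂_trunc_eq_sum_range, map_sum, coeff_psComp]
  rw [← Finset.sum_subset (Finset.range_subset_range.mpr (by omega : p + 1 ≤ n + 1))]
  · apply Finset.sum_congr rfl
    intro k _
    rw [coeff_C_mul]
  · intro k _ hk
    rw [mem_range, not_lt] at hk
    rw [coeff_C_mul, coeff_pow_zero hu (by omega), mul_zero]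

lemma coeff_eval₂_poly (hu : constantCoeff u = 0) (Q : Polynomial ℝ) (n : ℕ) :
    coeff n (Polynomial.eval₂ (C) u Q) = ∑ k ∈ range (n + 1), Q.coeff k * coeff n (u ^ k) := by
  have hd : Q.natDegree < Q.natDegree + n + 1 := by omega
  rw [Polynomial.eval₂_eq_sum_range' _ hd]
  rw [map_sum]
  rw [← Finset.sum_subset (Finset.range_subset_range.mpr (by omega : n + 1 ≤ Q.natDegree + n + 1))]
  · exact Finset.sum_congr rfl fun k _ => by rw [coeff_C_mul]
  · intro k _ hk
    rw [mem_range, not_lt] at hk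
    rw [coeff_C_mul, coeff_pow_zero hu (by omega), mul_zero]

lemma psComp_mul (hu : constantCoeff u = 0) (v w : PowerSeries ℝ) :
    psComp (v * w) u = psComp v u * psComp w u := by
  ext n
  set P := trunc (n + 1) v
  set Q := trunc (n + 1) w
  have h1 : coeff n (psComp (v * w) u) = coeff n (Polynomial.eval₂ (C) u (P * Q)) := by
    rw [coeff_eval₂_poly hu, coeff_psComp]
    apply Finset.sum_congr rfl
    intro k hk
    rw [mem_range] at hk
    congr 1
    have h3 := congrArg (fun q => Polynomial.coeff q k) (trunc_trunc_mul_trunc (n := n + 1) v w)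
    simp only [coeff_trunc, if_pos hk] at h3
    rw [← Polynomial.coe_mul, Polynomial.coeff_coe] at h3
    exact h3.symm
  rw [h1, Polynomial.eval₂_mul, PowerSeries.coeff_mul, PowerSeries.coeff_mul]
  apply Finset.sum_congr rfl
  intro x hx
  rw [Finset.HasAntidiagonal.mem_antidiagonal] at hx
  rw [coeff_eval₂_trunc hu v (by omega : x.1 ≤ n), coeff_eval₂_trunc hu w (by omega : x.2 ≤ n)]

lemma psComp_add (v w : PowerSeries ℝ) : psComp (v + w) u = psComp v u + psComp w u := by
  ext n
  simp [psComp, add_mul, Finset.sum_add_distrib]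

lemma psComp_sub (v w : PowerSeries ℝ) : psComp (v - w) u = psComp v u - psComp w u := by
  ext n
  simp [psComp, sub_mul, Finset.sum_sub_distrib]

lemma psComp_C (r : ℝ) : psComp (C r) u = C r := by
  ext n
  rw [coeff_psComp]
  simp only [PowerSeries.coeff_C, ite_mul, zero_mul]
  rw [Finset.sum_ite_eq' (range (n+1)) 0]
  simp [PowerSeries.coeff_C, PowerSeries.coeff_one]

lemma psComp_one : psComp 1 u = 1 := by
  have := psComp_C (u := u) 1
  simpa using this

lemma psComp_X (hu : constantCoeff u = 0) : psComp X u = u := by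
  ext n
  rw [coeff_psComp]
  simp only [PowerSeries.coeff_X, ite_mul, zero_mul, one_mul]
  rw [Finset.sum_ite_eq' (range (n+1)) 1]
  split_ifs with h
  · rw [pow_one]
  · rw [mem_range, not_lt] at h
    rw [show n = 0 from by omega]
    simp [PowerSeries.coeff_zero_eq_constantCoeff, hu]

end PsCompAux
/-- If the Riordan array `L = (g, f)` has tridiagonal production matrix with diagonal
`a₁, a, a, …` and subdiagonal `b₁, b, b, …`, then `L⁻¹ = (1/(g∘f̄), f̄)` is the
coefficient array of a family of monic orthogonal polynomials satisfying the
corresponding three-term recurrence. -/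
theorem riordan_tridiagonal_inverse_orthogonal (a b a₁ b₁ : ℝ) (hb : b ≠ 0) (hb₁ : b₁ ≠ 0)
    (f fbar g h : PowerSeries ℝ)
    (hfbar : fbar = PowerSeries.X *
      (1 + PowerSeries.C a * PowerSeries.X + PowerSeries.C b * PowerSeries.X ^ 2)⁻¹)
    (hf0 : PowerSeries.constantCoeff f = 0)
    (hfinv : psComp fbar f = PowerSeries.X)
    (hg : g = (1 - PowerSeries.C a₁ * PowerSeries.X -
      PowerSeries.C b₁ * PowerSeries.X * f)⁻¹)
    (hh : h = (psComp g fbar)⁻¹)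
    (p : ℕ → Polynomial ℝ)
    (hp : ∀ n, p n = ∑ k ∈ Finset.range (n + 1),
      Polynomial.C (PowerSeries.coeff n (h * fbar ^ k)) * Polynomial.X ^ k) :
    p 0 = 1 ∧
    p 1 = Polynomial.X - Polynomial.C a₁ ∧
    p 2 = (Polynomial.X - Polynomial.C a) * p 1 - Polynomial.C b₁ * p 0 ∧
    (∀ n, 2 ≤ n →
      p (n + 1) = (Polynomial.X - Polynomial.C a) * p n - Polynomial.C b * p (n - 1)) := by
  open PsCompAux in
  set D : PowerSeries ℝ := 1 + PowerSeries.C a * PowerSeries.X + PowerSeries.C b * PowerSeries.X ^ 2 with hD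
  have hD0 : PowerSeries.constantCoeff D = 1 := by simp [hD]
  have hfbarD : fbar * D = PowerSeries.X := by
    rw [hfbar, mul_assoc, PowerSeries.inv_mul_cancel D (by rw [hD0]; norm_num), mul_one]
  have hfbar0 : PowerSeries.constantCoeff fbar = 0 := by
    have := congrArg (PowerSeries.constantCoeff) hfbarD
    simp only [map_mul, hD0, mul_one, PowerSeries.constantCoeff_X] at this
    exact this
  -- f = X * (1 + a f + b f²)
  have hDf : psComp D f = 1 + PowerSeries.C a * f + PowerSeries.C b * f ^ 2 := by
    rw [hD, PsCompAux.psComp_add, PsCompAux.psComp_add, PsCompAux.psComp_one,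
      PsCompAux.psComp_mul hf0, PsCompAux.psComp_C, PsCompAux.psComp_X hf0, sq,
      PsCompAux.psComp_mul hf0, PsCompAux.psComp_mul hf0, PsCompAux.psComp_C,
      PsCompAux.psComp_X hf0, ← sq]
  have hfeq : f = PowerSeries.X * (1 + PowerSeries.C a * f + PowerSeries.C b * f ^ 2) := by
    have := congrArg (fun v => psComp v f) hfbarD
    simp only [PsCompAux.psComp_mul hf0, hfinv, hDf, PsCompAux.psComp_X hf0] at this
    exact this.symm
  -- F := f ∘ fbar = X
  set F := psComp f fbar with hFdef
  have hFeq : F = fbar * (1 + PowerSeries.C a * F + PowerSeries.C b * F ^ 2) := by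
    have := congrArg (fun v => psComp v fbar) hfeq
    simp only [PsCompAux.psComp_mul hfbar0, PsCompAux.psComp_add, PsCompAux.psComp_one,
      PsCompAux.psComp_C, PsCompAux.psComp_X hfbar0, sq, ← hFdef] at this
    simpa [sq] using this
  have hXeq : (PowerSeries.X : PowerSeries ℝ) =
      fbar * (1 + PowerSeries.C a * PowerSeries.X + PowerSeries.C b * PowerSeries.X ^ 2) := by
    rw [← hD]; linear_combination -hfbarD
  have hFX : F = PowerSeries.X := by
    have hzero : (F - PowerSeries.X) *
        (1 - fbar * (PowerSeries.C a + PowerSeries.C b * (F + PowerSeries.X))) = 0 := by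
      linear_combination hFeq - hXeq
    rcases mul_eq_zero.mp hzero with h1 | h1
    · exact sub_eq_zero.mp h1
    · exfalso
      have := congrArg (PowerSeries.constantCoeff) h1
      simp [hfbar0] at this
  -- h = 1 - a₁ fbar - b₁ X fbar
  set W : PowerSeries ℝ := 1 - PowerSeries.C a₁ * PowerSeries.X -
      PowerSeries.C b₁ * PowerSeries.X * f with hW
  have hW0 : PowerSeries.constantCoeff W ≠ 0 := by
    simp [hW, hf0]
  have hgW : g * W = 1 := by rw [hg]; exact PowerSeries.inv_mul_cancel W hW0
  have hGE : psComp g fbar *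
      (1 - PowerSeries.C a₁ * fbar - PowerSeries.C b₁ * PowerSeries.X * fbar) = 1 := by
    have := congrArg (fun v => psComp v fbar) hgW
    simp only [PsCompAux.psComp_mul hfbar0, hW, PsCompAux.psComp_sub, PsCompAux.psComp_one,
      PsCompAux.psComp_C, PsCompAux.psComp_X hfbar0, ← hFdef, hFX] at this
    linear_combination this
  set E : PowerSeries ℝ := 1 - PowerSeries.C a₁ * fbar -
      PowerSeries.C b₁ * PowerSeries.X * fbar with hEdef
  have hG0 : PowerSeries.constantCoeff (psComp g fbar) ≠ 0 := by
    have := congrArg (PowerSeries.constantCoeff) hGE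
    simp only [map_mul, map_one] at this
    exact left_ne_zero_of_mul_eq_one this
  have hGh : psComp g fbar * h = 1 := by
    rw [hh]; exact PowerSeries.mul_inv_cancel _ hG0
  have hE : h = E := by
    have hzero : psComp g fbar * (h - E) = 0 := by
      rw [hEdef]; linear_combination hGh - hGE
    rcases mul_eq_zero.mp hzero with h1 | h1
    · exact absurd (by rw [h1, map_zero]) hG0
    · exact sub_eq_zero.mp h1
  -- coefficient facts about fbar
  have hfrec : fbar = PowerSeries.X - PowerSeries.C a * (PowerSeries.X * fbar) -
      PowerSeries.C b * (PowerSeries.X ^ 2 * fbar) := by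
    rw [hD] at hfbarD; linear_combination hfbarD
  have hfbar1 : PowerSeries.coeff 1 fbar = 1 := by
    have := congrArg (PowerSeries.coeff 1) hfrec
    simpa [PowerSeries.coeff_C_mul, PowerSeries.coeff_succ_X_mul,
      PowerSeries.coeff_X_pow_mul', PowerSeries.coeff_X,
      PowerSeries.coeff_zero_eq_constantCoeff, hfbar0] using this
  have hfbar2 : PowerSeries.coeff 2 fbar = -a := by
    have := congrArg (PowerSeries.coeff 2) hfrec
    have h2 : PowerSeries.coeff 2 (PowerSeries.X ^ 2 * fbar) =
        PowerSeries.constantCoeff fbar := by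
      have := PowerSeries.coeff_X_pow_mul fbar 2 0
      simpa [PowerSeries.coeff_zero_eq_constantCoeff] using this
    simp only [map_sub, PowerSeries.coeff_C_mul, PowerSeries.coeff_succ_X_mul, h2,
      PowerSeries.coeff_X, hfbar0, hfbar1, mul_zero, mul_one] at this
    norm_num at this
    linarith
  -- basic coefficients of h
  have hh0 : PowerSeries.coeff 0 h = 1 := by
    rw [hE, hEdef]
    simp [PowerSeries.coeff_zero_eq_constantCoeff, hfbar0]
  have hx1 : PowerSeries.coeff 1 (PowerSeries.X * fbar) = 0 := by
    simpa [PowerSeries.coeff_zero_eq_constantCoeff, hfbar0] using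
      PowerSeries.coeff_succ_X_mul 0 fbar
  have hh1 : PowerSeries.coeff 1 h = -a₁ := by
    rw [hE, hEdef]
    simp [PowerSeries.coeff_C_mul, mul_assoc, hx1, hfbar1,
      PowerSeries.coeff_X, PowerSeries.coeff_one]
  -- recurrence for h (column 0): h = (1 + (a-a₁)X + (b-b₁)X²) - a X h - b X² h
  have hhrec : h = (1 + PowerSeries.C (a - a₁) * PowerSeries.X +
      PowerSeries.C (b - b₁) * PowerSeries.X ^ 2) -
      PowerSeries.C a * (PowerSeries.X * h) - PowerSeries.C b * (PowerSeries.X ^ 2 * h) := by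
    rw [hD] at hfbarD
    rw [hE, hEdef]
    simp only [map_sub]
    linear_combination (- PowerSeries.C a₁ - PowerSeries.C b₁ * PowerSeries.X) * hfbarD
  -- recurrence for columns k+1
  have hmul : ∀ k : ℕ, h * fbar ^ (k+1) = PowerSeries.X * (h * fbar ^ k) -
      PowerSeries.C a * (PowerSeries.X * (h * fbar ^ (k+1))) -
      PowerSeries.C b * (PowerSeries.X ^ 2 * (h * fbar ^ (k+1))) := by
    intro k
    linear_combination (h * fbar ^ k) * hfrec
  -- vanishing above the diagonal
  have hvan : ∀ n k : ℕ, n < k → PowerSeries.coeff n (h * fbar ^ k) = 0 := by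
    intro n k hnk
    obtain ⟨w, hw⟩ := PowerSeries.X_dvd_iff.mpr hfbar0
    rw [hw, mul_pow, show h * (PowerSeries.X ^ k * w ^ k) = PowerSeries.X ^ k * (h * w ^ k) by ring,
      PowerSeries.coeff_X_pow_mul', if_neg (by omega)]
  -- polynomial coefficients
  have hpc : ∀ m j : ℕ, (p m).coeff j = PowerSeries.coeff m (h * fbar ^ j) := by
    intro m j
    rw [hp]
    rw [Polynomial.finset_sum_coeff]
    simp only [Polynomial.coeff_C_mul, Polynomial.coeff_X_pow, mul_ite, mul_one, mul_zero]
    rw [Finset.sum_ite_eq (Finset.range (m+1)) j]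
    split_ifs with hj
    · rfl
    · rw [Finset.mem_range, not_lt] at hj
      exact (hvan m j (by omega)).symm
  -- coefficient identities
  have cid1 : ∀ n k : ℕ, PowerSeries.coeff (n+2) (h * fbar ^ (k+1)) =
      PowerSeries.coeff (n+1) (h * fbar ^ k) - a * PowerSeries.coeff (n+1) (h * fbar ^ (k+1))
      - b * PowerSeries.coeff n (h * fbar ^ (k+1)) := by
    intro n k
    have := congrArg (PowerSeries.coeff (n+2)) (hmul k)
    have h2 : PowerSeries.coeff (n+2) (PowerSeries.X ^ 2 * (h * fbar ^ (k+1))) =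
        PowerSeries.coeff n (h * fbar ^ (k+1)) := PowerSeries.coeff_X_pow_mul _ 2 n
    simpa [PowerSeries.coeff_C_mul, PowerSeries.coeff_succ_X_mul, h2] using this
  have cid0 : ∀ n : ℕ, PowerSeries.coeff (n+3) h =
      - (a * PowerSeries.coeff (n+2) h) - b * PowerSeries.coeff (n+1) h := by
    intro n
    have := congrArg (PowerSeries.coeff (n+3)) hhrec
    have h2 : PowerSeries.coeff (n+3) (PowerSeries.X ^ 2 * h) =
        PowerSeries.coeff (n+1) h := PowerSeries.coeff_X_pow_mul _ 2 (n+1)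
    simpa [PowerSeries.coeff_C_mul, PowerSeries.coeff_succ_X_mul, h2, PowerSeries.coeff_one,
      sub_mul, PowerSeries.coeff_X, PowerSeries.coeff_X_pow] using this
  have cid0' : PowerSeries.coeff 2 h =
      (b - b₁) - a * PowerSeries.coeff 1 h - b * PowerSeries.coeff 0 h := by
    have := congrArg (PowerSeries.coeff 2) hhrec
    have h2 : PowerSeries.coeff 2 (PowerSeries.X ^ 2 * h) =
        PowerSeries.coeff 0 h := PowerSeries.coeff_X_pow_mul _ 2 0
    simpa [PowerSeries.coeff_C_mul, PowerSeries.coeff_succ_X_mul, h2, PowerSeries.coeff_one,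
      sub_mul, PowerSeries.coeff_X, PowerSeries.coeff_X_pow,
      PowerSeries.coeff_zero_eq_constantCoeff] using this
  -- now the four goals
  refine ⟨?_, ?_, ?_, ?_⟩
  · have hh0' : PowerSeries.constantCoeff h = 1 := by
      simpa [PowerSeries.coeff_zero_eq_constantCoeff] using hh0
    rw [hp]
    simp [pow_zero, hh0']
  · rw [hp]
    have hc11 : PowerSeries.coeff 1 (h * fbar ^ 1) = 1 := by
      have := congrArg (PowerSeries.coeff 1) (hmul 0)
      simpa [PowerSeries.coeff_C_mul, PowerSeries.coeff_succ_X_mul,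
        PowerSeries.coeff_X_pow_mul', pow_zero, mul_one, hh0,
        PowerSeries.coeff_zero_eq_constantCoeff, hfbar0, map_mul] using this
    rw [Finset.sum_range_succ, Finset.sum_range_succ, Finset.range_zero, Finset.sum_empty]
    rw [pow_zero, hc11]
    simp [hh1]
    ring
  · ext j
    have hrhs : ((Polynomial.X - Polynomial.C a) * p 1 - Polynomial.C b₁ * p 0).coeff j =
        (p 1 * Polynomial.X).coeff j - a * (p 1).coeff j - b₁ * (p 0).coeff j := by
      have : (Polynomial.X - Polynomial.C a) * p 1 - Polynomial.C b₁ * p 0 =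
          p 1 * Polynomial.X - Polynomial.C a * p 1 - Polynomial.C b₁ * p 0 := by ring
      rw [this]
      simp [Polynomial.coeff_sub, Polynomial.coeff_C_mul]
    rw [hrhs]
    rcases j with _ | j
    · simp only [Polynomial.mul_coeff_zero, Polynomial.coeff_X_zero, mul_zero, zero_sub,
        hpc, pow_zero, mul_one]
      rw [cid0', hh0]
      ring
    · rw [Polynomial.coeff_mul_X]
      simp only [hpc, pow_zero, mul_one]
      have hc := cid1 0 j
      simp only [Nat.zero_add, zero_add, pow_zero, mul_one] at hc
      rw [hc, hvan 0 (j+1) (by omega)]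
      ring
  · intro n hn
    obtain ⟨m, rfl⟩ : ∃ m, n = m + 2 := ⟨n - 2, by omega⟩
    ext j
    have hrhs : ((Polynomial.X - Polynomial.C a) * p (m+2) -
        Polynomial.C b * p (m + 2 - 1)).coeff j =
        (p (m+2) * Polynomial.X).coeff j - a * (p (m+2)).coeff j - b * (p (m+1)).coeff j := by
      have he : (Polynomial.X - Polynomial.C a) * p (m+2) - Polynomial.C b * p (m + 2 - 1) =
          p (m+2) * Polynomial.X - Polynomial.C a * p (m+2) - Polynomial.C b * p (m+1) := by
        rw [show m + 2 - 1 = m + 1 from rfl]; ring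
      rw [he]
      simp [Polynomial.coeff_sub, Polynomial.coeff_C_mul]
    rw [hrhs]
    rcases j with _ | j
    · simp only [Polynomial.mul_coeff_zero, Polynomial.coeff_X_zero, mul_zero, zero_sub,
        hpc, pow_zero, mul_one]
      have hc := cid0 m
      rw [show m + 3 = m + 2 + 1 from rfl] at hc
      rw [hc]
    · rw [Polynomial.coeff_mul_X]
      simp only [hpc, pow_zero, mul_one]
      have hc := cid1 (m+1) j
      rw [show m + 1 + 2 = m + 2 + 1 from rfl, show m + 1 + 1 = m + 2 from rfl] at hc
      rw [hc]
end

section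
/- Let a, b, a₁, b₁ ∈ ℝ with b ≠ 0 and b₁ ≠ 0. Let f ∈ ℝ[[X]] have constant term 0 and be the compositional inverse of f̄ = X·(1 + aX + bX²)⁻¹, set g = (1 − a₁X − b₁X·f)⁻¹, let h = (g∘f̄)⁻¹, and define p_n(X) = ∑_{k=0}^{n} ([Xⁿ](h·f̄ᵏ))·Xᵏ ∈ ℝ[X]. If 𝓛 : ℝ[X] → ℝ is any linear functional with 𝓛(p_0) = 1 and 𝓛(p_i) = 0 for all i ≥ 1 (the moment functional of the orthogonal family p_n), then for every n ∈ ℕ, 𝓛(Xⁿ) = [Xⁿ]g. In other words, the moments of the orthogonal polynomial family defined by L⁻¹ = (g,f)⁻¹ are the entries of the first column of L = (g,f). -/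
open PowerSeries Finset

lemma coeff_pow_zero {u : PowerSeries ℝ} (hu : constantCoeff u = 0)
    {n k : ℕ} (hnk : n < k) : coeff n (u ^ k) = 0 := by
  obtain ⟨t, ht⟩ := X_dvd_iff.2 hu
  rw [ht, mul_pow, coeff_X_pow_mul', if_neg (by omega)]

lemma coeff_psComp (v u : PowerSeries ℝ) (n : ℕ) :
    coeff n (psComp v u) =
      ∑ k ∈ range (n + 1), coeff k v * coeff n (u ^ k) := by
  simp [psComp, coeff_mk]

lemma coeff_mul_psComp {u : PowerSeries ℝ} (hu : constantCoeff u = 0)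
    (w v : PowerSeries ℝ) (n : ℕ) :
    coeff n (w * psComp v u) =
      ∑ k ∈ range (n + 1), coeff k v * coeff n (w * u ^ k) := by
  rw [coeff_mul]
  have h1 : ∀ q ∈ antidiagonal n, coeff q.1 w * coeff q.2 (psComp v u)
      = ∑ k ∈ range (n + 1), coeff q.1 w * (coeff k v * coeff q.2 (u ^ k)) := by
    intro q hq
    have hq2 : q.2 ≤ n := by
      have := mem_antidiagonal.mp hq; omega
    rw [coeff_psComp, mul_sum]
    refine sum_subset (by intro x hx; simp only [mem_range] at *; omega) ?_
    intro k hk hk2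
    have hk3 : q.2 < k := by simp only [mem_range] at hk hk2; omega
    rw [coeff_pow_zero hu hk3, mul_zero, mul_zero]
  rw [sum_congr rfl h1, sum_comm]
  refine sum_congr rfl fun k _ => ?_
  rw [coeff_mul, mul_sum]
  exact sum_congr rfl fun q _ => by ring

lemma psComp_one (u : PowerSeries ℝ) : psComp 1 u = 1 := by
  ext n
  rw [coeff_psComp]
  rw [sum_eq_single 0]
  · simp
  · intro k _ hk; simp [coeff_one, hk]
  · simp

lemma psComp_mul {u : PowerSeries ℝ} (hu : constantCoeff u = 0)
    (v w : PowerSeries ℝ) :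
    psComp (v * w) u = psComp v u * psComp w u := by
  ext n
  have hRHS : coeff n (psComp v u * psComp w u)
      = ∑ a ∈ range (n + 1), ∑ b ∈ range (n + 1),
          coeff a v * coeff b w * coeff n (u ^ (a + b)) := by
    rw [mul_comm (psComp v u), coeff_mul_psComp hu (psComp w u) v n]
    refine sum_congr rfl fun a _ => ?_
    rw [mul_comm (psComp w u), coeff_mul_psComp hu (u ^ a) w n, mul_sum]
    refine sum_congr rfl fun b _ => ?_
    rw [← pow_add]
    ring
  rw [hRHS, coeff_psComp]
  -- LHS: ∑_k coeff k (v*w) * coeff n (u^k)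
  have hLHS : ∑ k ∈ range (n + 1), coeff k (v * w) * coeff n (u ^ k)
      = ∑ q ∈ (range (n + 1)).biUnion (fun k => antidiagonal k),
          coeff q.1 v * coeff q.2 w * coeff n (u ^ (q.1 + q.2)) := by
    rw [sum_biUnion]
    · refine sum_congr rfl fun k _ => ?_
      rw [coeff_mul, sum_mul]
      refine sum_congr rfl fun q hq => ?_
      rw [mem_antidiagonal.mp hq]
    · intro i _ j _ hij
      simp only [Finset.disjoint_left]
      intro q hqi hqj
      exact hij (by rw [← mem_antidiagonal.mp hqi, mem_antidiagonal.mp hqj])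
  rw [hLHS]
  have hset : (range (n + 1)).biUnion (fun k => antidiagonal k)
      = (range (n + 1) ×ˢ range (n + 1)).filter (fun q => q.1 + q.2 ≤ n) := by
    ext q
    simp only [mem_biUnion, mem_range, HasAntidiagonal.mem_antidiagonal, mem_filter, mem_product]
    constructor
    · rintro ⟨k, hk, rfl⟩; omega
    · rintro ⟨⟨h1, h2⟩, h3⟩; exact ⟨q.1 + q.2, by omega, rfl⟩
  rw [hset, sum_filter_of_ne, Finset.sum_product]
  intro q _ hq
  by_contra hle
  exact hq (by rw [coeff_pow_zero hu (by omega), mul_zero])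

lemma constantCoeff_psComp (v u : PowerSeries ℝ) :
    constantCoeff (psComp v u) = constantCoeff v := by
  have := coeff_psComp v u 0
  simpa using this

lemma psComp_pow {u : PowerSeries ℝ} (hu : constantCoeff u = 0)
    (v : PowerSeries ℝ) (j : ℕ) :
    psComp (v ^ j) u = (psComp v u) ^ j := by
  induction j with
  | zero => simpa using psComp_one u
  | succ j ih => rw [pow_succ, pow_succ, psComp_mul hu, ih]

lemma psComp_X (v : PowerSeries ℝ) : psComp v X = v := by
  ext n
  rw [coeff_psComp]
  rw [sum_eq_single n]
  · simp [coeff_X_pow]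
  · intro k _ hk; simp [coeff_X_pow, Ne.symm hk]
  · intro hn; simp at hn

lemma psComp_assoc {u t : PowerSeries ℝ} (hu : constantCoeff u = 0)
    (ht : constantCoeff t = 0) (v : PowerSeries ℝ) :
    psComp (psComp v u) t = psComp v (psComp u t) := by
  have hut : constantCoeff (psComp u t) = 0 := by
    rw [constantCoeff_psComp]; exact hu
  ext n
  rw [coeff_psComp, coeff_psComp]
  have hLHS : ∀ k ∈ range (n + 1), coeff k (psComp v u) * coeff n (t ^ k)
      = ∑ l ∈ range (n + 1), coeff l v * (coeff k (u ^ l) * coeff n (t ^ k)) := by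
    intro k hk
    rw [coeff_psComp, sum_mul]
    refine sum_subset (by intro x hx; simp only [mem_range] at *; omega) ?_ |>.trans
      (sum_congr rfl fun l _ => by ring)
    intro l hl hl2
    have : k < l := by simp only [mem_range] at hl hl2; omega
    rw [coeff_pow_zero hu this, mul_zero, zero_mul]
  rw [sum_congr rfl hLHS, sum_comm]
  refine sum_congr rfl fun l _ => ?_
  rw [← psComp_pow ht u l, coeff_psComp, mul_sum]

/-- If the Riordan array `L = (g, f)` has tridiagonal production matrix, then the
moments of the orthogonal polynomial family whose coefficient array is `L⁻¹` are the
entries of the first column of `L`:  `𝓛(xⁿ) = [xⁿ] g`. -/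
theorem riordan_moments_first_column (a b a₁ b₁ : ℝ) (hb : b ≠ 0) (hb₁ : b₁ ≠ 0)
    (f fbar g h : PowerSeries ℝ)
    (hfbar : fbar = PowerSeries.X *
      (1 + PowerSeries.C a * PowerSeries.X + PowerSeries.C b * PowerSeries.X ^ 2)⁻¹)
    (hf0 : PowerSeries.constantCoeff f = 0)
    (hfinv : psComp fbar f = PowerSeries.X)
    (hg : g = (1 - PowerSeries.C a₁ * PowerSeries.X -
      PowerSeries.C b₁ * PowerSeries.X * f)⁻¹)
    (hh : h = (psComp g fbar)⁻¹)
    (p : ℕ → Polynomial ℝ)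
    (hp : ∀ n, p n = ∑ k ∈ Finset.range (n + 1),
      Polynomial.C (PowerSeries.coeff n (h * fbar ^ k)) * Polynomial.X ^ k)
    (𝓛 : Polynomial ℝ →ₗ[ℝ] ℝ)
    (hL0 : 𝓛 (p 0) = 1)
    (hL : ∀ i, 1 ≤ i → 𝓛 (p i) = 0) :
    ∀ n, 𝓛 (Polynomial.X ^ n) = PowerSeries.coeff n g := by
  have hfbar0 : constantCoeff fbar = 0 := by
    rw [hfbar]; simp
  have hvan : ∀ (w : PowerSeries ℝ) (k j : ℕ), k < j → coeff k (w * fbar ^ j) = 0 := by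
    intro w k j hkj
    rw [coeff_mul]
    refine sum_eq_zero fun q hq => ?_
    have : q.2 < j := by have := mem_antidiagonal.mp hq; omega
    rw [coeff_pow_zero hfbar0 this, mul_zero]
  have hg0 : constantCoeff g = 1 := by
    rw [hg, PowerSeries.constantCoeff_inv]
    simp [hf0]
  have hgf0 : constantCoeff (psComp g fbar) = 1 := by
    rw [constantCoeff_psComp, hg0]
  have hh1 : psComp g fbar * h = 1 := by
    rw [hh]; exact PowerSeries.mul_inv_cancel _ (by rw [hgf0]; exact one_ne_zero)
  have key1 : g * psComp h f = 1 := by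
    have h2 : psComp (psComp g fbar * h) f = 1 := by rw [hh1, psComp_one]
    rw [psComp_mul hf0, psComp_assoc hfbar0 hf0, hfinv, psComp_X] at h2
    exact h2
  have keyj : ∀ j, g * psComp (h * fbar ^ j) f = X ^ j := by
    intro j
    rw [psComp_mul hf0, psComp_pow hf0, hfinv, ← mul_assoc, key1, one_mul]
  have hmat : ∀ n j, ∑ k ∈ range (n + 1),
      coeff k (h * fbar ^ j) * coeff n (g * f ^ k)
      = coeff n ((X : PowerSeries ℝ) ^ j) := by
    intro n j
    rw [← coeff_mul_psComp hf0 g (h * fbar ^ j) n, keyj j]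
  have hpc : ∀ k j, (p k).coeff j = coeff k (h * fbar ^ j) := by
    intro k j
    rw [hp k, Polynomial.finset_sum_coeff]
    simp only [Polynomial.coeff_C_mul, Polynomial.coeff_X_pow, mul_ite, mul_one, mul_zero]
    rw [Finset.sum_ite_eq]
    split_ifs with hjk
    · rfl
    · have : k < j := by simp only [mem_range] at hjk; omega
      rw [hvan h k j this]
  have hXp : ∀ n, (Polynomial.X ^ n : Polynomial ℝ)
      = ∑ k ∈ range (n + 1), (coeff n (g * f ^ k)) • p k := by
    intro n
    ext j
    rw [Polynomial.finset_sum_coeff]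
    simp only [Polynomial.coeff_smul, smul_eq_mul, hpc, Polynomial.coeff_X_pow]
    have h1 : ∑ k ∈ range (n + 1), coeff n (g * f ^ k) * coeff k (h * fbar ^ j)
        = coeff n ((X : PowerSeries ℝ) ^ j) := by
      rw [← hmat n j]
      exact sum_congr rfl fun k _ => mul_comm _ _
    rw [h1, PowerSeries.coeff_X_pow]
    by_cases hnj : n = j <;> simp [hnj, Ne.symm, eq_comm]
  intro n
  rw [hXp n, map_sum]
  simp only [map_smul, smul_eq_mul]
  rw [sum_eq_single 0]
  · rw [hL0, mul_one, pow_zero, mul_one]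
  · intro k _ hk
    rw [hL k (Nat.one_le_iff_ne_zero.2 hk), mul_zero]
  · simp
end

section
/- Let r ∈ ℝ and n ∈ ℕ. Let P̃_m(r) = ∑_{k=0}^{m} (−1)^{m−k}·C(m+k,2k)·C(2k,k)·rᵏ denote the shifted Legendre polynomials evaluated at r. Then the Hankel determinant of the sequence (P̃_m(r))_{m≥0}, namely the determinant of the (n+1)×(n+1) matrix whose (i,j) entry is P̃_{i+j}(r) for 0 ≤ i,j ≤ n, equals 2ⁿ·(r(r−1))^{n(n+1)/2}. -/
open Finset

namespace HankelSL

lemma choose_mul' (n k s : ℕ) (h : s ≤ k) :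
    n.choose k * k.choose s = n.choose s * (n - s).choose (k - s) := by
  rcases le_or_gt k n with h1 | h1
  · exact Nat.choose_mul h
  · rw [Nat.choose_eq_zero_of_lt h1]
    rcases le_or_gt s n with h2 | h2
    · rw [Nat.choose_eq_zero_of_lt (show n - s < k - s by omega)]; ring
    · rw [Nat.choose_eq_zero_of_lt h2]; ring

lemma vdm (a b : ℕ) : ∑ s ∈ range (b + 1), a.choose s * b.choose s = (a + b).choose b := by
  rw [Nat.add_choose_eq,
    Finset.Nat.sum_antidiagonal_eq_sum_range_succ (fun x y => a.choose x * b.choose y)]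
  refine Finset.sum_congr rfl fun s hs => ?_
  rw [Nat.choose_symm (Finset.mem_range_succ_iff.mp hs)]


lemma key1 (m k : ℕ) :
    ∑ j ∈ range (k + 1), m.choose j * (m.choose j * (m - j).choose (k - j))
      = (m + k).choose (2 * k) * (2 * k).choose k := by
  have h1 : ∀ j ∈ range (k + 1),
      m.choose j * (m.choose j * (m - j).choose (k - j))
        = m.choose k * k.choose j * m.choose j := by
    intro j hj
    rw [choose_mul' m k j (Finset.mem_range_succ_iff.mp hj)]; ring
  rw [Finset.sum_congr rfl h1]
  have h3 : (∑ j ∈ range (k + 1), m.choose j * k.choose j) = (m + k).choose k := vdm m k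
  calc ∑ j ∈ range (k + 1), m.choose k * k.choose j * m.choose j
      = m.choose k * ∑ j ∈ range (k + 1), m.choose j * k.choose j := by
        rw [Finset.mul_sum]; exact Finset.sum_congr rfl fun j _ => by ring
    _ = m.choose k * (m + k).choose k := by rw [h3]
    _ = (m + k).choose (2 * k) * (2 * k).choose k := by
        rw [choose_mul' (m + k) (2 * k) k (by omega)]
        have : m + k - k = m := by omega
        have h5 : 2 * k - k = k := by omega
        rw [this, h5]; ring

lemma key2_term (m j s : ℕ) (hs : s ≤ j) :
    m.choose (2 * s) * ((2 * s).choose s * (m - 2 * s).choose (j - s))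
      = m.choose j * ((m - j).choose s * j.choose s) := by
  have e1 : m.choose (2 * s) * (2 * s).choose s = m.choose s * (m - s).choose s := by
    rw [choose_mul' m (2 * s) s (by omega)]
    congr 1; · congr 1; omega
  have e2 : (m - s).choose j * j.choose s = (m - s).choose s * (m - s - s).choose (j - s) :=
    choose_mul' (m - s) j s hs
  have e3 : m - s - s = m - 2 * s := by omega
  have e4 : m.choose (s + j) * (s + j).choose s = m.choose s * (m - s).choose j := by
    rw [choose_mul' m (s + j) s (by omega)]
    have h : s + j - s = j := by omega
    rw [h]
  have e5 : m.choose (s + j) * (s + j).choose j = m.choose j * (m - j).choose s := by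
    rw [choose_mul' m (s + j) j (by omega)]
    have h : s + j - j = s := by omega
    rw [h]
  have e6 : (s + j).choose s = (s + j).choose j := by
    have := Nat.choose_symm (show j ≤ s + j by omega)
    rwa [show s + j - j = s by omega] at this
  calc m.choose (2 * s) * ((2 * s).choose s * (m - 2 * s).choose (j - s))
      = (m.choose (2 * s) * (2 * s).choose s) * (m - 2 * s).choose (j - s) := by ring
    _ = m.choose s * ((m - s).choose s * (m - s - s).choose (j - s)) := by rw [e1, e3]; ring
    _ = m.choose s * ((m - s).choose j * j.choose s) := by rw [e2]
    _ = (m.choose s * (m - s).choose j) * j.choose s := by ring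
    _ = (m.choose (s + j) * (s + j).choose s) * j.choose s := by rw [e4]
    _ = (m.choose (s + j) * (s + j).choose j) * j.choose s := by rw [e6]
    _ = m.choose j * ((m - j).choose s * j.choose s) := by rw [e5]; ring

lemma key2 (m j : ℕ) (hj : j ≤ m) :
    ∑ s ∈ range (j + 1), m.choose (2 * s) * ((2 * s).choose s * (m - 2 * s).choose (j - s))
      = m.choose j * m.choose j := by
  rw [Finset.sum_congr rfl (fun s hs => key2_term m j s (Finset.mem_range_succ_iff.mp hs)),
    ← Finset.mul_sum, vdm]
  congr 1
  congr 1
  omega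

lemma triangle_sum {M : Type*} [AddCommMonoid M] (N : ℕ) (f : ℕ → ℕ → M)
    (hf : ∀ j t, N ≤ j + t → f j t = 0) :
    ∑ j ∈ range N, ∑ t ∈ range N, f j t
      = ∑ k ∈ range N, ∑ j ∈ range (k + 1), f j (k - j) := by
  have hR : ∑ k ∈ range N, ∑ j ∈ range (k + 1), f j (k - j)
      = ∑ x ∈ (range N).sigma (fun k => range (k + 1)), f x.2 (x.1 - x.2) :=
    (Finset.sum_sigma (range N) (fun k => range (k + 1)) (fun x => f x.2 (x.1 - x.2))).symm
  rw [← Finset.sum_product', hR]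
  rw [← Finset.sum_filter_of_ne (p := fun p => p.1 + p.2 < N)
    (fun p _ hp => by by_contra hc; exact hp (hf p.1 p.2 (by omega)))]
  refine Finset.sum_nbij' (i := fun p => ⟨p.1 + p.2, p.1⟩) (j := fun x => (x.2, x.1 - x.2))
    ?_ ?_ ?_ ?_ ?_
  · intro p hp
    simp only [Finset.mem_filter, Finset.mem_product, Finset.mem_range] at hp
    simp only [Finset.mem_sigma, Finset.mem_range]
    omega
  · intro x hx
    simp only [Finset.mem_sigma, Finset.mem_range] at hx
    simp only [Finset.mem_filter, Finset.mem_product, Finset.mem_range]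
    omega
  · intro p hp
    simp only [Finset.mem_filter, Finset.mem_product, Finset.mem_range] at hp
    ext <;> simp
  · intro x hx
    simp only [Finset.mem_sigma, Finset.mem_range] at hx
    ext <;> simp <;> omega
  · intro p hp
    simp only [Finset.mem_filter, Finset.mem_product, Finset.mem_range] at hp
    simp only []
    congr 1
    omega


noncomputable def cc (r : ℝ) : ℝ := r + (r - 1)
noncomputable def qq (r : ℝ) : ℝ := r * (r - 1)

noncomputable def L (r : ℝ) (m k : ℕ) : ℝ :=
  ∑ s ∈ range (m + 1),
    (m.choose (k + 2 * s) : ℝ) * ((k + 2 * s).choose s : ℝ) * cc r ^ (m - (k + 2 * s)) * qq r ^ s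

noncomputable def gam (r : ℝ) : ℕ → ℝ
  | 0 => 1
  | k + 1 => 2 * qq r ^ (k + 1)

lemma L_eq_zero (r : ℝ) {m k : ℕ} (h : m < k) : L r m k = 0 := by
  unfold L
  refine Finset.sum_eq_zero fun s _ => ?_
  rw [Nat.choose_eq_zero_of_lt (by omega)]
  push_cast; ring

lemma L_zero_zero (r : ℝ) : L r 0 0 = 1 := by
  simp [L]

lemma L_diag (r : ℝ) (m : ℕ) : L r m m = 1 := by
  unfold L
  rw [Finset.sum_eq_single 0]
  · simp
  · intro s _ hs
    rw [Nat.choose_eq_zero_of_lt (show m < m + 2 * s by omega)]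
    push_cast; ring
  · simp


lemma L_succ_succ (r : ℝ) (m k : ℕ) :
    L r (m + 1) (k + 1) = L r m k + cc r * L r m (k + 1) + qq r * L r m (k + 2) := by
  have hL : L r (m + 1) (k + 1)
      = (∑ s ∈ range (m + 2), (m.choose (k + 2 * s) : ℝ) * ((k + 1 + 2 * s).choose s : ℝ)
          * cc r ^ (m + 1 - (k + 1 + 2 * s)) * qq r ^ s)
        + ∑ s ∈ range (m + 2), (m.choose (k + 1 + 2 * s) : ℝ) * ((k + 1 + 2 * s).choose s : ℝ)
          * cc r ^ (m + 1 - (k + 1 + 2 * s)) * qq r ^ s := by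
    unfold L
    rw [← Finset.sum_add_distrib]
    refine Finset.sum_congr rfl fun s _ => ?_
    have h1 : (m + 1).choose (k + 1 + 2 * s)
        = m.choose (k + 2 * s) + m.choose (k + 1 + 2 * s) := by
      rw [show k + 1 + 2 * s = k + 2 * s + 1 from by ring]
      exact Nat.choose_succ_succ m (k + 2 * s)
    rw [h1]
    push_cast
    ring
  have hSB : (∑ s ∈ range (m + 2), (m.choose (k + 1 + 2 * s) : ℝ)
        * ((k + 1 + 2 * s).choose s : ℝ) * cc r ^ (m + 1 - (k + 1 + 2 * s)) * qq r ^ s)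
      = cc r * L r m (k + 1) := by
    rw [Finset.sum_range_succ, Nat.choose_eq_zero_of_lt (show m < k + 1 + 2 * (m + 1) by omega)]
    push_cast
    rw [zero_mul, zero_mul, zero_mul, add_zero]
    conv_rhs => rw [L, Finset.mul_sum]
    refine Finset.sum_congr rfl fun s _ => ?_
    rcases le_or_gt (k + 1 + 2 * s) m with h | h
    · rw [show m + 1 - (k + 1 + 2 * s) = (m - (k + 1 + 2 * s)) + 1 from by omega]
      ring
    · rw [Nat.choose_eq_zero_of_lt h]
      push_cast
      ring
  have hSA : (∑ s ∈ range (m + 2), (m.choose (k + 2 * s) : ℝ) * ((k + 1 + 2 * s).choose s : ℝ)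
        * cc r ^ (m + 1 - (k + 1 + 2 * s)) * qq r ^ s)
      = L r m k + qq r * L r m (k + 2) := by
    rw [Finset.sum_range_succ']
    have hs1 : ∀ s : ℕ, (m.choose (k + 2 * (s + 1)) : ℝ)
          * ((k + 1 + 2 * (s + 1)).choose (s + 1) : ℝ)
          * cc r ^ (m + 1 - (k + 1 + 2 * (s + 1))) * qq r ^ (s + 1)
        = (m.choose (k + 2 * (s + 1)) : ℝ) * ((k + 2 + 2 * s).choose s : ℝ)
            * cc r ^ (m - (k + 2 + 2 * s)) * qq r ^ (s + 1)
          + (m.choose (k + 2 * (s + 1)) : ℝ) * ((k + 2 + 2 * s).choose (s + 1) : ℝ)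
            * cc r ^ (m - (k + 2 + 2 * s)) * qq r ^ (s + 1) := by
      intro s
      rw [show k + 1 + 2 * (s + 1) = k + 2 + 2 * s + 1 from by ring, Nat.choose_succ_succ,
        show m + 1 - (k + 2 + 2 * s + 1) = m - (k + 2 + 2 * s) from by omega]
      push_cast
      ring
    rw [Finset.sum_congr rfl (fun s _ => hs1 s), Finset.sum_add_distrib]
    have hP1 : (∑ s ∈ range (m + 1), (m.choose (k + 2 * (s + 1)) : ℝ)
          * ((k + 2 + 2 * s).choose s : ℝ) * cc r ^ (m - (k + 2 + 2 * s)) * qq r ^ (s + 1))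
        = qq r * L r m (k + 2) := by
      conv_rhs => rw [L, Finset.mul_sum]
      refine Finset.sum_congr rfl fun s _ => ?_
      rw [show k + 2 * (s + 1) = k + 2 + 2 * s from by ring]
      ring
    have hP2 : (∑ s ∈ range (m + 1), (m.choose (k + 2 * (s + 1)) : ℝ)
            * ((k + 2 + 2 * s).choose (s + 1) : ℝ) * cc r ^ (m - (k + 2 + 2 * s)) * qq r ^ (s + 1))
          + (m.choose (k + 2 * 0) : ℝ) * ((k + 1 + 2 * 0).choose 0 : ℝ)
            * cc r ^ (m + 1 - (k + 1 + 2 * 0)) * qq r ^ 0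
        = L r m k := by
      conv_rhs => rw [L, Finset.sum_range_succ']
      congr 1
      · rw [Finset.sum_range_succ, Nat.choose_eq_zero_of_lt (show m < k + 2 * (m + 1) by omega)]
        push_cast
        rw [zero_mul, zero_mul, zero_mul, add_zero]
        refine Finset.sum_congr rfl fun s _ => ?_
        rw [show k + 2 * (s + 1) = k + 2 + 2 * s from by ring]
      · rw [Nat.choose_zero_right, Nat.choose_zero_right,
          show m + 1 - (k + 1 + 2 * 0) = m - (k + 2 * 0) from by omega]
    rw [hP1, add_assoc, hP2]
    ring
  rw [hL, hSA, hSB]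
  ring

lemma L_succ_zero (r : ℝ) (m : ℕ) :
    L r (m + 1) 0 = cc r * L r m 0 + 2 * qq r * L r m 1 := by
  have hL : L r (m + 1) 0
      = (∑ s ∈ range (m + 1), ((m + 1).choose (2 * (s + 1)) : ℝ)
          * ((2 * (s + 1)).choose (s + 1) : ℝ) * cc r ^ (m + 1 - 2 * (s + 1)) * qq r ^ (s + 1))
        + cc r ^ (m + 1) := by
    unfold L
    rw [Finset.sum_range_succ']
    congr 1
    · refine Finset.sum_congr rfl fun s _ => ?_
      rw [show 0 + 2 * (s + 1) = 2 * (s + 1) from by omega]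
    · simp
  have hsplit : ∀ s : ℕ, ((m + 1).choose (2 * (s + 1)) : ℝ)
        * ((2 * (s + 1)).choose (s + 1) : ℝ) * cc r ^ (m + 1 - 2 * (s + 1)) * qq r ^ (s + 1)
      = (m.choose (2 * s + 1) : ℝ) * (2 * ((2 * s + 1).choose s : ℝ))
          * cc r ^ (m - (2 * s + 1)) * qq r ^ (s + 1)
        + (m.choose (2 * s + 2) : ℝ) * ((2 * s + 2).choose (s + 1) : ℝ)
          * cc r ^ (m + 1 - (2 * s + 2)) * qq r ^ (s + 1) := by
    intro s
    have h1 : (m + 1).choose (2 * (s + 1)) = m.choose (2 * s + 1) + m.choose (2 * s + 2) := by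
      rw [show 2 * s + 2 = 2 * s + 1 + 1 from by ring,
        show 2 * (s + 1) = 2 * s + 1 + 1 from by ring]
      exact Nat.choose_succ_succ m (2 * s + 1)
    have h3 : (2 * s + 1).choose (s + 1) = (2 * s + 1).choose s := by
      have h := Nat.choose_symm (show s + 1 ≤ 2 * s + 1 by omega)
      rw [show 2 * s + 1 - (s + 1) = s from by omega] at h
      exact h.symm
    have h2 : (2 * (s + 1)).choose (s + 1) = 2 * ((2 * s + 1).choose s) := by
      rw [show 2 * (s + 1) = 2 * s + 1 + 1 from by ring, Nat.choose_succ_succ, h3]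
      omega
    have h7 : (2 * s + 2).choose (s + 1) = 2 * ((2 * s + 1).choose s) := by
      rw [show 2 * s + 2 = 2 * (s + 1) from by ring]
      exact h2
    have h4 : m + 1 - 2 * (s + 1) = m - (2 * s + 1) := by omega
    have h6 : m + 1 - (2 * s + 2) = m - (2 * s + 1) := by omega
    rw [h1, h2, h4, h6, h7]
    push_cast
    ring
  rw [hL, Finset.sum_congr rfl (fun s _ => hsplit s), Finset.sum_add_distrib]
  have hA : (∑ s ∈ range (m + 1), (m.choose (2 * s + 1) : ℝ) * (2 * ((2 * s + 1).choose s : ℝ))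
        * cc r ^ (m - (2 * s + 1)) * qq r ^ (s + 1))
      = 2 * qq r * L r m 1 := by
    conv_rhs => rw [L, Finset.mul_sum]
    refine Finset.sum_congr rfl fun s _ => ?_
    rw [show 1 + 2 * s = 2 * s + 1 from by ring]
    ring
  have hB : (∑ s ∈ range (m + 1), (m.choose (2 * s + 2) : ℝ) * ((2 * s + 2).choose (s + 1) : ℝ)
        * cc r ^ (m + 1 - (2 * s + 2)) * qq r ^ (s + 1))
      + cc r ^ (m + 1)
      = cc r * L r m 0 := by
    conv_rhs => rw [L, Finset.mul_sum, Finset.sum_range_succ']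
    congr 1
    · rw [Finset.sum_range_succ, Nat.choose_eq_zero_of_lt (show m < 2 * m + 2 by omega),
        Nat.cast_zero, zero_mul, zero_mul, zero_mul, add_zero]
      refine Finset.sum_congr rfl fun s _ => ?_
      rw [show 0 + 2 * (s + 1) = 2 * s + 2 from by omega]
      rcases le_or_gt (2 * s + 2) m with h | h
      · rw [show m + 1 - (2 * s + 2) = (m - (2 * s + 2)) + 1 from by omega]
        ring
      · rw [Nat.choose_eq_zero_of_lt h, Nat.cast_zero]
        ring
    · rw [show 0 + 2 * 0 = 0 from by omega]
      simp [pow_succ]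
      ring
  rw [hA, add_assoc, hB]
  ring


lemma L_zero_eq_sq (r : ℝ) (m : ℕ) :
    L r m 0 = ∑ k ∈ range (m + 1),
      ((m.choose k : ℝ) * (m.choose k : ℝ)) * r ^ k * (r - 1) ^ (m - k) := by
  have hF : ∀ j t : ℕ, m + 1 ≤ j + t →
      ((m.choose (2 * j) * ((2 * j).choose j * (m - 2 * j).choose t) : ℕ) : ℝ)
        * r ^ (j + t) * (r - 1) ^ (m - (j + t)) = 0 := by
    intro j t h
    rcases le_or_gt (2 * j) m with h2 | h2
    · rw [Nat.choose_eq_zero_of_lt (show m - 2 * j < t by omega)]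
      push_cast
      ring
    · rw [Nat.choose_eq_zero_of_lt h2]
      push_cast
      ring
  have h1 : L r m 0 = ∑ j ∈ range (m + 1), ∑ t ∈ range (m + 1),
      ((m.choose (2 * j) * ((2 * j).choose j * (m - 2 * j).choose t) : ℕ) : ℝ)
        * r ^ (j + t) * (r - 1) ^ (m - (j + t)) := by
    unfold L
    refine Finset.sum_congr rfl fun s hs => ?_
    rw [show 0 + 2 * s = 2 * s from by omega]
    have hcc : cc r ^ (m - 2 * s) = ∑ t ∈ range (m - 2 * s + 1),
        r ^ t * (r - 1) ^ (m - 2 * s - t) * ((m - 2 * s).choose t : ℝ) := by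
      rw [cc]
      exact add_pow r (r - 1) (m - 2 * s)
    calc (m.choose (2 * s) : ℝ) * ((2 * s).choose s : ℝ) * cc r ^ (m - 2 * s) * qq r ^ s
        = ∑ t ∈ range (m - 2 * s + 1), (m.choose (2 * s) : ℝ) * ((2 * s).choose s : ℝ)
            * (r ^ t * (r - 1) ^ (m - 2 * s - t) * ((m - 2 * s).choose t : ℝ)) * qq r ^ s := by
          rw [hcc, Finset.mul_sum, Finset.sum_mul]
      _ = ∑ t ∈ range (m - 2 * s + 1),
            ((m.choose (2 * s) * ((2 * s).choose s * (m - 2 * s).choose t) : ℕ) : ℝ)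
              * r ^ (s + t) * (r - 1) ^ (m - (s + t)) := by
          refine Finset.sum_congr rfl fun t ht => ?_
          rcases le_or_gt (2 * s) m with h2 | h2
          · have ht' : t ≤ m - 2 * s := Finset.mem_range_succ_iff.mp ht
            rw [show m - (s + t) = m - 2 * s - t + s from by omega, qq, pow_add, pow_add,
              mul_pow]
            push_cast
            ring
          · rw [Nat.choose_eq_zero_of_lt h2]
            push_cast
            ring
      _ = ∑ t ∈ range (m + 1),
            ((m.choose (2 * s) * ((2 * s).choose s * (m - 2 * s).choose t) : ℕ) : ℝ)
              * r ^ (s + t) * (r - 1) ^ (m - (s + t)) := by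
          refine Finset.sum_subset (Finset.range_subset_range.mpr (by omega)) fun t ht hnt => ?_
          rw [Finset.mem_range] at ht hnt
          rw [Nat.choose_eq_zero_of_lt (show m - 2 * s < t by omega)]
          push_cast
          ring
  rw [h1, triangle_sum (m + 1) _ hF]
  refine Finset.sum_congr rfl fun k hk => ?_
  have hk' : k ≤ m := Finset.mem_range_succ_iff.mp hk
  have hj : ∀ j ∈ range (k + 1),
      ((m.choose (2 * j) * ((2 * j).choose j * (m - 2 * j).choose (k - j)) : ℕ) : ℝ)
          * r ^ (j + (k - j)) * (r - 1) ^ (m - (j + (k - j)))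
        = ((m.choose (2 * j) * ((2 * j).choose j * (m - 2 * j).choose (k - j)) : ℕ) : ℝ)
          * (r ^ k * (r - 1) ^ (m - k)) := by
    intro j hjm
    rw [show j + (k - j) = k from by
      have := Finset.mem_range_succ_iff.mp hjm; omega]
    ring
  rw [Finset.sum_congr rfl hj, ← Finset.sum_mul, ← Nat.cast_sum, key2 m k hk']
  push_cast
  ring

lemma L_zero_eq (r : ℝ) (m : ℕ) :
    L r m 0 = ∑ k ∈ range (m + 1),
      (-1 : ℝ) ^ (m - k) * ((m + k).choose (2 * k) : ℝ) * ((2 * k).choose k : ℝ) * r ^ k := by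
  rw [L_zero_eq_sq]
  have hF : ∀ j t : ℕ, m + 1 ≤ j + t →
      ((m.choose j * (m.choose j * (m - j).choose t) : ℕ) : ℝ)
        * r ^ (j + t) * (-1 : ℝ) ^ (m - (j + t)) = 0 := by
    intro j t h
    rcases le_or_gt j m with h2 | h2
    · rw [Nat.choose_eq_zero_of_lt (show m - j < t by omega)]
      push_cast
      ring
    · rw [Nat.choose_eq_zero_of_lt h2]
      push_cast
      ring
  have h1 : (∑ j ∈ range (m + 1), ((m.choose j : ℝ) * (m.choose j : ℝ)) * r ^ j
        * (r - 1) ^ (m - j))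
      = ∑ j ∈ range (m + 1), ∑ t ∈ range (m + 1),
        ((m.choose j * (m.choose j * (m - j).choose t) : ℕ) : ℝ)
          * r ^ (j + t) * (-1 : ℝ) ^ (m - (j + t)) := by
    refine Finset.sum_congr rfl fun j hj => ?_
    have hrm : (r - 1) ^ (m - j) = ∑ t ∈ range (m - j + 1),
        r ^ t * (-1 : ℝ) ^ (m - j - t) * ((m - j).choose t : ℝ) := by
      rw [show r - 1 = r + (-1) from by ring]
      exact add_pow r (-1) (m - j)
    calc ((m.choose j : ℝ) * (m.choose j : ℝ)) * r ^ j * (r - 1) ^ (m - j)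
        = ∑ t ∈ range (m - j + 1), ((m.choose j : ℝ) * (m.choose j : ℝ)) * r ^ j
            * (r ^ t * (-1 : ℝ) ^ (m - j - t) * ((m - j).choose t : ℝ)) := by
          rw [hrm, Finset.mul_sum]
      _ = ∑ t ∈ range (m - j + 1),
            ((m.choose j * (m.choose j * (m - j).choose t) : ℕ) : ℝ)
              * r ^ (j + t) * (-1 : ℝ) ^ (m - (j + t)) := by
          refine Finset.sum_congr rfl fun t ht => ?_
          rw [show m - (j + t) = m - j - t from (Nat.sub_sub m j t).symm, pow_add]
          push_cast
          ring
      _ = ∑ t ∈ range (m + 1),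
            ((m.choose j * (m.choose j * (m - j).choose t) : ℕ) : ℝ)
              * r ^ (j + t) * (-1 : ℝ) ^ (m - (j + t)) := by
          refine Finset.sum_subset (Finset.range_subset_range.mpr (by omega)) fun t ht hnt => ?_
          rw [Finset.mem_range] at ht hnt
          rw [Nat.choose_eq_zero_of_lt (show m - j < t by omega)]
          push_cast
          ring
  rw [h1, triangle_sum (m + 1) _ hF]
  refine Finset.sum_congr rfl fun k hk => ?_
  have hk' : k ≤ m := Finset.mem_range_succ_iff.mp hk
  have hj : ∀ j ∈ range (k + 1),
      ((m.choose j * (m.choose j * (m - j).choose (k - j)) : ℕ) : ℝ)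
          * r ^ (j + (k - j)) * (-1 : ℝ) ^ (m - (j + (k - j)))
        = ((m.choose j * (m.choose j * (m - j).choose (k - j)) : ℕ) : ℝ)
          * (r ^ k * (-1 : ℝ) ^ (m - k)) := by
    intro j hjm
    rw [show j + (k - j) = k from by
      have := Finset.mem_range_succ_iff.mp hjm; omega]
    ring
  rw [Finset.sum_congr rfl hj, ← Finset.sum_mul, ← Nat.cast_sum]
  have hk1 : (∑ j ∈ range (k + 1), m.choose j * (m.choose j * (m - j).choose (k - j)))
      = (m + k).choose (2 * k) * (2 * k).choose k := key1 m k
  rw [hk1]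
  push_cast
  ring


lemma gam_succ (r : ℝ) (k : ℕ) : gam r (k + 1) = 2 * qq r ^ (k + 1) := rfl

lemma gam_zero (r : ℝ) : gam r 0 = 1 := rfl

lemma gstep (r : ℝ) (i j N : ℕ) (hN : i + 2 ≤ N) :
    ∑ k ∈ range N, L r (i + 1) k * L r j k * gam r k
      = cc r * ∑ k ∈ range N, L r i k * L r j k * gam r k
        + (∑ k ∈ range N, L r i k * L r j (k + 1) * (2 * qq r ^ (k + 1))
        + ∑ k ∈ range N, L r i (k + 1) * L r j k * (2 * qq r ^ (k + 1))) := by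
  obtain ⟨M, rfl⟩ : ∃ M, N = M + 1 := ⟨N - 1, by omega⟩
  rw [Finset.sum_range_succ' (fun k => L r (i + 1) k * L r j k * gam r k) M]
  have hrec : ∀ k ∈ range M, L r (i + 1) (k + 1) * L r j (k + 1) * gam r (k + 1)
      = L r i k * L r j (k + 1) * (2 * qq r ^ (k + 1))
        + cc r * (L r i (k + 1) * L r j (k + 1) * gam r (k + 1))
        + qq r * L r i (k + 2) * L r j (k + 1) * (2 * qq r ^ (k + 1)) := by
    intro k _
    rw [L_succ_succ, gam_succ]
    ring
  rw [Finset.sum_congr rfl hrec, Finset.sum_add_distrib, Finset.sum_add_distrib, L_succ_zero]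
  have hc : (∑ k ∈ range M, cc r * (L r i (k + 1) * L r j (k + 1) * gam r (k + 1)))
        + cc r * (L r i 0 * L r j 0 * gam r 0)
      = cc r * ∑ k ∈ range (M + 1), L r i k * L r j k * gam r k := by
    rw [Finset.sum_range_succ' (fun k => L r i k * L r j k * gam r k) M, mul_add,
      Finset.mul_sum]
  have hS1 : (∑ k ∈ range M, L r i k * L r j (k + 1) * (2 * qq r ^ (k + 1)))
      = ∑ k ∈ range (M + 1), L r i k * L r j (k + 1) * (2 * qq r ^ (k + 1)) := by
    rw [Finset.sum_range_succ, L_eq_zero r (show i < M by omega)]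
    ring
  have hS2 : (∑ k ∈ range M, qq r * L r i (k + 2) * L r j (k + 1) * (2 * qq r ^ (k + 1)))
        + 2 * qq r * L r i 1 * L r j 0 * gam r 0
      = ∑ k ∈ range (M + 1), L r i (k + 1) * L r j k * (2 * qq r ^ (k + 1)) := by
    rw [Finset.sum_range_succ' (fun k => L r i (k + 1) * L r j k * (2 * qq r ^ (k + 1))) M]
    have hterm : ∀ k ∈ range M, qq r * L r i (k + 2) * L r j (k + 1) * (2 * qq r ^ (k + 1))
        = L r i (k + 1 + 1) * L r j (k + 1) * (2 * qq r ^ (k + 1 + 1)) := by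
      intro k _
      rw [show k + 1 + 1 = k + 2 from by omega, pow_succ]
      ring
    rw [Finset.sum_congr rfl hterm]
    simp only [zero_add, pow_one, gam_zero]
    ring
  linear_combination hS1 + hS2 + hc

lemma gswap (r : ℝ) (i j N : ℕ) (hi : i + 2 ≤ N) (hj : j + 2 ≤ N) :
    ∑ k ∈ range N, L r (i + 1) k * L r j k * gam r k
      = ∑ k ∈ range N, L r i k * L r (j + 1) k * gam r k := by
  have h2 : (∑ k ∈ range N, L r i k * L r (j + 1) k * gam r k)
      = ∑ k ∈ range N, L r (j + 1) k * L r i k * gam r k :=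
    Finset.sum_congr rfl fun k _ => by ring
  rw [gstep r i j N hi, h2, gstep r j i N hj]
  have h3 : (∑ k ∈ range N, L r j k * L r i k * gam r k)
      = ∑ k ∈ range N, L r i k * L r j k * gam r k :=
    Finset.sum_congr rfl fun k _ => by ring
  have h4 : (∑ k ∈ range N, L r j k * L r i (k + 1) * (2 * qq r ^ (k + 1)))
      = ∑ k ∈ range N, L r i (k + 1) * L r j k * (2 * qq r ^ (k + 1)) :=
    Finset.sum_congr rfl fun k _ => by ring
  have h5 : (∑ k ∈ range N, L r j (k + 1) * L r i k * (2 * qq r ^ (k + 1)))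
      = ∑ k ∈ range N, L r i k * L r j (k + 1) * (2 * qq r ^ (k + 1)) :=
    Finset.sum_congr rfl fun k _ => by ring
  rw [h3, h4, h5]
  ring

lemma gmain (r : ℝ) : ∀ i j N : ℕ, i + j + 2 ≤ N →
    ∑ k ∈ range N, L r i k * L r j k * gam r k = L r (i + j) 0 := by
  intro i
  induction i with
  | zero =>
    intro j N hN
    rw [Finset.sum_eq_single 0]
    · show L r 0 0 * L r j 0 * 1 = L r (0 + j) 0
      rw [L_zero_zero, Nat.zero_add]
      ring
    · intro k _ hk
      rw [L_eq_zero r (show (0 : ℕ) < k by omega)]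
      ring
    · intro h
      exact absurd (Finset.mem_range.mpr (by omega)) h
  | succ i ih =>
    intro j N hN
    rw [gswap r i j N (by omega) (by omega), ih (j + 1) N (by omega),
      show i + (j + 1) = i + 1 + j from by omega]


lemma gauss_sum (n : ℕ) : (∑ k ∈ range n, (k + 1)) = n * (n + 1) / 2 := by
  induction n with
  | zero => simp
  | succ m ih =>
    rw [Finset.sum_range_succ, ih]
    obtain ⟨t, ht⟩ := Nat.even_mul_succ_self m
    have hx : (m + 1) * (m + 1 + 1) = m * (m + 1) + 2 * (m + 1) := by ring
    omega

lemma gam_prod (r : ℝ) (n : ℕ) :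
    ∏ k ∈ range (n + 1), gam r k = 2 ^ n * (r * (r - 1)) ^ (n * (n + 1) / 2) := by
  rw [Finset.prod_range_succ' (fun k => gam r k) n]
  have h1 : ∀ k ∈ range n, gam r (k + 1) = 2 * qq r ^ (k + 1) := fun k _ => gam_succ r k
  rw [Finset.prod_congr rfl h1, gam_zero, mul_one, Finset.prod_mul_distrib,
    Finset.prod_const, Finset.prod_pow_eq_pow_sum]
  rw [gauss_sum, Finset.card_range, qq]

theorem main_result (r : ℝ) (n : ℕ) (P : ℕ → ℝ)
    (hP : ∀ m, P m = ∑ k ∈ Finset.range (m + 1),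
      (-1 : ℝ) ^ (m - k) * ((m + k).choose (2 * k) : ℝ) * ((2 * k).choose k : ℝ) * r ^ k) :
    Matrix.det (Matrix.of fun i j : Fin (n + 1) => P ((i : ℕ) + (j : ℕ))) =
      2 ^ n * (r * (r - 1)) ^ (n * (n + 1) / 2) := by
  classical
  have hPL : ∀ m, P m = L r m 0 := fun m => by rw [hP m, L_zero_eq]
  set A : Matrix (Fin (n + 1)) (Fin (n + 1)) ℝ :=
    Matrix.of (fun i k : Fin (n + 1) => L r (i : ℕ) (k : ℕ)) with hA
  have hM : (Matrix.of fun i j : Fin (n + 1) => P ((i : ℕ) + (j : ℕ)))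
      = A * Matrix.diagonal (fun k : Fin (n + 1) => gam r (k : ℕ)) * A.transpose := by
    ext i j
    rw [Matrix.mul_apply]
    simp only [Matrix.mul_diagonal, Matrix.transpose_apply, hA, Matrix.of_apply]
    rw [Fin.sum_univ_eq_sum_range (fun k => L r (i : ℕ) k * gam r k * L r (j : ℕ) k) (n + 1)]
    have hext : (∑ k ∈ range (n + 1), L r (i : ℕ) k * gam r k * L r (j : ℕ) k)
        = ∑ k ∈ range (n + n + 2), L r (i : ℕ) k * gam r k * L r (j : ℕ) k := by
      refine Finset.sum_subset (Finset.range_subset_range.mpr (by omega)) fun k hk hnk => ?_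
      rw [Finset.mem_range] at hk hnk
      rw [L_eq_zero r (show (i : ℕ) < k by have := i.isLt; omega)]
      ring
    rw [hext]
    have hre : ∀ k ∈ range (n + n + 2), L r (i : ℕ) k * gam r k * L r (j : ℕ) k
        = L r (i : ℕ) k * L r (j : ℕ) k * gam r k := fun k _ => by ring
    rw [Finset.sum_congr rfl hre,
      gmain r (i : ℕ) (j : ℕ) (n + n + 2) (by have := i.isLt; have := j.isLt; omega), hPL]
  rw [hM, Matrix.det_mul, Matrix.det_mul, Matrix.det_transpose]
  have hAtri : A.BlockTriangular OrderDual.toDual := by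
    intro a b hab
    exact L_eq_zero r (show (a : ℕ) < (b : ℕ) from hab)
  have hAdet : A.det = 1 := by
    rw [Matrix.det_of_lowerTriangular A hAtri]
    have : ∀ a : Fin (n + 1), A a a = 1 := fun a => L_diag r (a : ℕ)
    rw [Finset.prod_congr rfl fun a _ => this a, Finset.prod_const_one]
  rw [hAdet, Matrix.det_diagonal, one_mul, mul_one,
    Fin.prod_univ_eq_prod_range (fun k => gam r k) (n + 1), gam_prod]

end HankelSL


/-- The Hankel transform of the sequence of shifted Legendre polynomial values
`P̃ₘ(r)` is `hₙ = 2ⁿ·(r(r−1))^(n(n+1)/2)`. -/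
theorem hankel_shifted_legendre (r : ℝ) (n : ℕ) (P : ℕ → ℝ)
    (hP : ∀ m, P m = ∑ k ∈ Finset.range (m + 1),
      (-1 : ℝ) ^ (m - k) * ((m + k).choose (2 * k) : ℝ) * ((2 * k).choose k : ℝ) * r ^ k) :
    Matrix.det (Matrix.of fun i j : Fin (n + 1) => P ((i : ℕ) + (j : ℕ))) =
      2 ^ n * (r * (r - 1)) ^ (n * (n + 1) / 2) := by
  exact HankelSL.main_result r n P hP
end

section
/- Let r ∈ ℝ with r > 1 and let n ∈ ℕ. Then the shifted Legendre polynomial value P̃_n(r) = ∑_{k=0}^{n} (−1)^{n−k}·C(n+k,2k)·C(2k,k)·rᵏ has the moment representation P̃_n(r) = (1/π)·∫_{2r−1−2√(r(r−1))}^{2r−1+2√(r(r−1))} xⁿ/√(−x² + 2(2r−1)x − 1) dx. -/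
open Real MeasureTheory intervalIntegral Finset


lemma chooseChain (N a b : ℕ) :
    N.choose a * (N - a).choose b = N.choose (a + b) * (a + b).choose a := by
  rcases le_or_gt (a + b) N with h | h
  · have ha : a ≤ N := by omega
    have hb : b ≤ N - a := by omega
    have haab : a ≤ a + b := Nat.le_add_right a b
    have : ((N.choose a * (N - a).choose b : ℕ) : ℚ) =
        ((N.choose (a + b) * (a + b).choose a : ℕ) : ℚ) := by
      push_cast
      rw [Nat.cast_choose ℚ ha, Nat.cast_choose ℚ hb, Nat.cast_choose ℚ h,
        Nat.cast_choose ℚ haab]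
      have h1 : N - a - b = N - (a + b) := by omega
      have h2 : a + b - a = b := by omega
      rw [h1, h2]
      have f1 : (Nat.factorial a : ℚ) ≠ 0 := Nat.cast_ne_zero.2 (Nat.factorial_ne_zero a)
      have f2 : (Nat.factorial b : ℚ) ≠ 0 := Nat.cast_ne_zero.2 (Nat.factorial_ne_zero b)
      have f3 : (Nat.factorial (N - a) : ℚ) ≠ 0 := Nat.cast_ne_zero.2 (Nat.factorial_ne_zero _)
      have f4 : (Nat.factorial (N - (a+b)) : ℚ) ≠ 0 := Nat.cast_ne_zero.2 (Nat.factorial_ne_zero _)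
      have f5 : (Nat.factorial (a+b) : ℚ) ≠ 0 := Nat.cast_ne_zero.2 (Nat.factorial_ne_zero _)
      have key : (Nat.factorial (N - a) : ℚ) = Nat.factorial (N - a) := rfl
      field_simp
    exact_mod_cast this
  · rcases le_or_gt a N with ha | ha
    · have h1 : (N - a).choose b = 0 := Nat.choose_eq_zero_of_lt (by omega)
      have h2 : N.choose (a + b) = 0 := Nat.choose_eq_zero_of_lt (by omega)
      simp [h1, h2]
    · have h1 : N.choose a = 0 := Nat.choose_eq_zero_of_lt (by omega)
      have h2 : N.choose (a + b) = 0 := Nat.choose_eq_zero_of_lt (by omega)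
      simp [h1, h2]

lemma vand (j m : ℕ) :
    ∑ k ∈ range (j + 1), j.choose k * m.choose k = (j + m).choose j := by
  rw [Nat.add_choose_eq, Finset.Nat.sum_antidiagonal_eq_sum_range_succ_mk]
  rw [← Finset.sum_range_reflect]
  refine Finset.sum_congr rfl fun k hk => ?_
  simp only [Finset.mem_range] at hk
  have hk' : k ≤ j := by omega
  have h1 : j + 1 - 1 - k = j - k := by omega
  rw [h1, Nat.choose_symm hk']

lemma nat1 (n j k : ℕ) (hkj : k ≤ j) :
    n.choose (2 * k) * (2 * k).choose k * (n - 2 * k).choose (j - k) =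
      n.choose j * (j.choose k * (n - j).choose k) := by
  have e1 : n.choose (2 * k) * (2 * k).choose k = n.choose k * (n - k).choose k := by
    have := chooseChain n k k
    rw [show k + k = 2 * k by ring] at this
    omega
  have e2 : (n - k).choose k * ((n - k) - k).choose (j - k) =
      (n - k).choose j * j.choose k := by
    have := chooseChain (n - k) k (j - k)
    rw [show k + (j - k) = j by omega] at this
    omega
  have e3 : n.choose k * (n - k).choose j = n.choose (k + j) * (k + j).choose k :=
    chooseChain n k j
  have e4 : n.choose j * (n - j).choose k = n.choose (j + k) * (j + k).choose j :=
    chooseChain n j k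
  have e5 : (k + j).choose k = (j + k).choose j := by
    rw [show k + j = j + k by ring]
    rw [← Nat.choose_symm (by omega : j ≤ j + k), show j + k - j = k by omega]
  have h7 : n - 2 * k = (n - k) - k := by omega
  calc n.choose (2*k) * (2*k).choose k * (n - 2*k).choose (j - k)
      = n.choose k * ((n - k).choose k * ((n-k) - k).choose (j - k)) := by rw [e1, h7]; ring
    _ = n.choose k * ((n - k).choose j * j.choose k) := by rw [e2]
    _ = (n.choose k * (n - k).choose j) * j.choose k := by ring
    _ = (n.choose (k+j) * (k+j).choose k) * j.choose k := by rw [e3]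
    _ = (n.choose (j+k) * (j+k).choose j) * j.choose k := by rw [e5, show k+j = j+k by ring]
    _ = (n.choose j * (n - j).choose k) * j.choose k := by rw [← e4]
    _ = n.choose j * (j.choose k * (n - j).choose k) := by ring

lemma sum1 (n j : ℕ) (hj : j ≤ n) :
    ∑ k ∈ range (j + 1), n.choose (2 * k) * (2 * k).choose k * (n - 2 * k).choose (j - k) =
      n.choose j * n.choose j := by
  have : ∀ k ∈ range (j + 1),
      n.choose (2 * k) * (2 * k).choose k * (n - 2 * k).choose (j - k) =
        n.choose j * (j.choose k * (n - j).choose k) := by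
    intro k hk
    exact nat1 n j k (by simp at hk; omega)
  rw [Finset.sum_congr rfl this, ← Finset.mul_sum, vand j (n - j),
    show j + (n - j) = n by omega]

lemma nat2 (n k j : ℕ) (hjk : j ≤ k) :
    n.choose j * (n - j).choose (k - j) = n.choose k * k.choose j := by
  have := chooseChain n j (k - j)
  rw [show j + (k - j) = k by omega] at this
  omega

lemma nat3 (n k : ℕ) :
    (n + k).choose (2 * k) * (2 * k).choose k = (n + k).choose k * n.choose k := by
  have := chooseChain (n + k) k k
  rw [show k + k = 2 * k by ring, show n + k - k = n by omega] at this
  omega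

lemma sum2 (n k : ℕ) (hk : k ≤ n) :
    ∑ j ∈ range (k + 1), n.choose j * n.choose j * (n - j).choose (k - j) =
      (n + k).choose (2 * k) * (2 * k).choose k := by
  have : ∀ j ∈ range (k + 1),
      n.choose j * n.choose j * (n - j).choose (k - j) =
        n.choose k * (k.choose j * n.choose j) := by
    intro j hj
    have hjk : j ≤ k := by simp at hj; omega
    calc n.choose j * n.choose j * (n - j).choose (k - j)
        = n.choose j * (n.choose j * (n - j).choose (k - j)) := by ring
      _ = n.choose j * (n.choose k * k.choose j) := by rw [nat2 n k j hjk]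
      _ = n.choose k * (k.choose j * n.choose j) := by ring
  rw [Finset.sum_congr rfl this, ← Finset.mul_sum, vand k n, nat3]
  ring

lemma id2 (n : ℕ) (u : ℝ) :
    ∑ j ∈ Finset.range (n + 1), (n.choose j : ℝ) ^ 2 * u ^ j * (u - 1) ^ (n - j) =
      ∑ k ∈ Finset.range (n + 1),
        (-1 : ℝ) ^ (n - k) * ((n + k).choose (2 * k) : ℝ) * ((2 * k).choose k : ℝ) * u ^ k := by
  have step1 : ∀ j ∈ Finset.range (n + 1),
      (n.choose j : ℝ) ^ 2 * u ^ j * (u - 1) ^ (n - j) =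
        ∑ k ∈ Finset.Ico j (n + 1),
          (n.choose j : ℝ) ^ 2 * (((n - j).choose (k - j) : ℕ) : ℝ) * (-1 : ℝ) ^ (n - k) * u ^ k := by
    intro j hj
    have hjn : j ≤ n := by simp at hj; omega
    rw [Finset.sum_Ico_eq_sum_range, show n + 1 - j = (n - j) + 1 by omega,
      show u - 1 = u + (-1) by ring, add_pow, Finset.mul_sum]
    refine Finset.sum_congr rfl fun i hi => ?_
    have hi' : i ≤ n - j := by simp at hi; omega
    rw [show j + i - j = i by omega, show n - (j + i) = n - j - i by omega]
    ring
  rw [Finset.sum_congr rfl step1, Finset.range_eq_Ico, Finset.sum_Ico_Ico_comm]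
  rw [← Finset.range_eq_Ico]
  refine Finset.sum_congr rfl fun k hk => ?_
  have hkn : k ≤ n := by simp at hk; omega
  have hs : ((∑ j ∈ Finset.range (k + 1),
      n.choose j * n.choose j * (n - j).choose (k - j) : ℕ) : ℝ) =
      ((n + k).choose (2 * k) : ℝ) * ((2 * k).choose k : ℝ) := by
    rw [sum2 n k hkn]; push_cast; ring
  rw [← Finset.range_eq_Ico]
  calc ∑ j ∈ Finset.range (k + 1),
        (n.choose j : ℝ) ^ 2 * (((n - j).choose (k - j) : ℕ) : ℝ) * (-1 : ℝ) ^ (n - k) * u ^ k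
      = ((∑ j ∈ Finset.range (k + 1),
          n.choose j * n.choose j * (n - j).choose (k - j) : ℕ) : ℝ) *
          ((-1 : ℝ) ^ (n - k) * u ^ k) := by
        push_cast
        rw [Finset.sum_mul]
        refine Finset.sum_congr rfl fun j _ => ?_
        ring
    _ = (-1 : ℝ) ^ (n - k) * ((n + k).choose (2 * k) : ℝ) * ((2 * k).choose k : ℝ) * u ^ k := by
        rw [hs]; ring

lemma id1 (n : ℕ) (u v : ℝ) :
    ∑ k ∈ Finset.range (n / 2 + 1),
      (n.choose (2 * k) : ℝ) * ((2 * k).choose k : ℝ) * (u + v) ^ (n - 2 * k) * (u * v) ^ k =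
    ∑ j ∈ Finset.range (n + 1), (n.choose j : ℝ) ^ 2 * u ^ j * v ^ (n - j) := by
  set G : ℕ → ℕ → ℝ := fun k j =>
    (n.choose (2 * k) : ℝ) * ((2 * k).choose k : ℝ) * ((n - 2 * k).choose (j - k) : ℝ) *
      u ^ j * v ^ (n - j) with hG
  have step1 : ∀ k ∈ Finset.range (n / 2 + 1),
      (n.choose (2 * k) : ℝ) * ((2 * k).choose k : ℝ) * (u + v) ^ (n - 2 * k) * (u * v) ^ k =
        ∑ j ∈ Finset.Ico k (n + 1), G k j := by
    intro k hk
    have h2k : 2 * k ≤ n := by simp at hk; omega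
    rw [Finset.sum_Ico_eq_sum_range]
    rw [(Finset.sum_subset (Finset.range_subset_range.2 (show n - 2 * k + 1 ≤ n + 1 - k by omega))
      (fun i _ hi => ?_)).symm]
    · rw [add_pow, Finset.mul_sum, Finset.sum_mul]
      refine Finset.sum_congr rfl fun i hi => ?_
      have hi' : i ≤ n - 2 * k := by simp at hi; omega
      rw [hG]
      simp only []
      rw [show k + i - k = i by omega, show n - (k + i) = n - 2 * k - i + k by omega]
      ring
    · rw [hG]
      simp only []
      rw [show (n - 2 * k).choose (k + i - k) = 0 from by
        rw [show k + i - k = i by omega]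
        exact Nat.choose_eq_zero_of_lt (by simp at hi ⊢; omega)]
      ring
  rw [Finset.sum_congr rfl step1]
  rw [Finset.sum_subset (Finset.range_subset_range.2 (show n / 2 + 1 ≤ n + 1 by omega))
    (fun k _ hk => Finset.sum_eq_zero fun j _ => by
      rw [hG]
      simp only []
      rw [show n.choose (2 * k) = 0 from Nat.choose_eq_zero_of_lt (by simp at hk; omega)]
      ring)]
  rw [Finset.range_eq_Ico, Finset.sum_Ico_Ico_comm, ← Finset.range_eq_Ico]
  refine Finset.sum_congr rfl fun j hj => ?_
  have hjn : j ≤ n := by simp at hj; omega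
  have hs : ((∑ k ∈ Finset.range (j + 1),
      n.choose (2 * k) * (2 * k).choose k * (n - 2 * k).choose (j - k) : ℕ) : ℝ) =
      (n.choose j : ℝ) * (n.choose j : ℝ) := by
    rw [sum1 n j hjn]; push_cast; ring
  rw [← Finset.range_eq_Ico]
  calc ∑ k ∈ Finset.range (j + 1), G k j
      = ((∑ k ∈ Finset.range (j + 1),
          n.choose (2 * k) * (2 * k).choose k * (n - 2 * k).choose (j - k) : ℕ) : ℝ) *
          (u ^ j * v ^ (n - j)) := by
        push_cast
        rw [Finset.sum_mul]
        refine Finset.sum_congr rfl fun k _ => ?_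
        rw [hG]
        ring
    _ = (n.choose j : ℝ) ^ 2 * u ^ j * v ^ (n - j) := by rw [hs]; ring


noncomputable def Jm (j : ℕ) : ℝ := ∫ t in (-1:ℝ)..1, t ^ j / Real.sqrt (1 - t ^ 2)

lemma sqrtInvInt : IntervalIntegrable (fun s : ℝ => (Real.sqrt s)⁻¹) volume 0 1 := by
  have h := intervalIntegral.intervalIntegrable_rpow' (a := 0) (b := 1)
    (r := -(1/2)) (by norm_num)
  apply h.mono_fun (Real.continuous_sqrt.measurable.inv.aestronglyMeasurable)
  filter_upwards [MeasureTheory.ae_restrict_mem measurableSet_uIoc] with s hs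
  have hs' : 0 < s ∧ s ≤ 1 := by
    simpa [Set.uIoc_of_le (by norm_num : (0:ℝ) ≤ 1)] using hs
  have : s ^ (-(1/2) : ℝ) = (Real.sqrt s)⁻¹ := by
    rw [Real.rpow_neg hs'.1.le, Real.sqrt_eq_rpow]
  simp only [Pi.inv_apply]
  rw [norm_inv, Real.norm_eq_abs, abs_of_nonneg (Real.sqrt_nonneg s), this,
    Real.norm_eq_abs, abs_of_nonneg (by positivity)]

lemma intLeft : IntervalIntegrable (fun t : ℝ => (Real.sqrt (1 - t))⁻¹) volume 0 1 := by
  have := (sqrtInvInt.comp_sub_left 1).symm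
  simpa using this

lemma intRight : IntervalIntegrable (fun t : ℝ => (Real.sqrt (1 + t))⁻¹) volume (-1) 0 := by
  have := sqrtInvInt.comp_add_left 1
  simpa using this

lemma measInt (j : ℕ) :
    AEStronglyMeasurable (fun t : ℝ => t ^ j / Real.sqrt (1 - t ^ 2))
      (volume.restrict (Set.uIoc (0:ℝ) 1)) :=
  (((measurable_id.pow_const j).div
    (Real.continuous_sqrt.measurable.comp
      ((measurable_const.sub (measurable_id.pow_const 2)))))).aestronglyMeasurable

lemma measInt' (j : ℕ) :
    AEStronglyMeasurable (fun t : ℝ => t ^ j / Real.sqrt (1 - t ^ 2))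
      (volume.restrict (Set.uIoc (-1:ℝ) 0)) :=
  (((measurable_id.pow_const j).div
    (Real.continuous_sqrt.measurable.comp
      ((measurable_const.sub (measurable_id.pow_const 2)))))).aestronglyMeasurable

lemma intInt (j : ℕ) :
    IntervalIntegrable (fun t : ℝ => t ^ j / Real.sqrt (1 - t ^ 2)) volume (-1) 1 := by
  have hL : IntervalIntegrable (fun t : ℝ => t ^ j / Real.sqrt (1 - t ^ 2)) volume (-1) 0 := by
    apply intRight.mono_fun (measInt' j)
    filter_upwards [MeasureTheory.ae_restrict_mem measurableSet_uIoc] with t ht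
    have ht' : -1 < t ∧ t ≤ 0 := by
      simpa [Set.uIoc_of_le (by norm_num : (-1:ℝ) ≤ 0)] using ht
    rw [Real.norm_eq_abs, Real.norm_eq_abs, abs_div, abs_pow,
      abs_of_nonneg (Real.sqrt_nonneg _), abs_of_nonneg (inv_nonneg.2 (Real.sqrt_nonneg _))]
    have hfac : Real.sqrt (1 - t ^ 2) = Real.sqrt (1 + t) * Real.sqrt (1 - t) := by
      rw [← Real.sqrt_mul (by linarith), show (1+t)*(1-t) = 1 - t^2 by ring]
    have h1 : (1:ℝ) ≤ Real.sqrt (1 - t) := by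
      nlinarith [Real.sq_sqrt (show (0:ℝ) ≤ 1 - t by linarith), Real.sqrt_nonneg (1 - t)]
    have htj : |t| ^ j ≤ 1 := pow_le_one₀ (abs_nonneg t) (by rw [abs_le]; constructor <;> linarith)
    have hsp : 0 < Real.sqrt (1 + t) := Real.sqrt_pos.2 (by linarith)
    calc |t| ^ j / Real.sqrt (1 - t ^ 2) ≤ 1 / Real.sqrt (1 + t) := by
          apply div_le_div₀ (by norm_num) htj hsp
          rw [hfac]
          exact le_mul_of_one_le_right hsp.le h1
      _ = (Real.sqrt (1 + t))⁻¹ := one_div _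
  have hR : IntervalIntegrable (fun t : ℝ => t ^ j / Real.sqrt (1 - t ^ 2)) volume 0 1 := by
    apply intLeft.mono_fun (measInt j)
    filter_upwards [MeasureTheory.ae_restrict_mem measurableSet_uIoc] with t ht
    have ht' : 0 < t ∧ t ≤ 1 := by
      simpa [Set.uIoc_of_le (by norm_num : (0:ℝ) ≤ 1)] using ht
    rw [Real.norm_eq_abs, Real.norm_eq_abs, abs_div, abs_pow,
      abs_of_nonneg (Real.sqrt_nonneg _), abs_of_nonneg (inv_nonneg.2 (Real.sqrt_nonneg _))]
    have hfac : Real.sqrt (1 - t ^ 2) = Real.sqrt (1 - t) * Real.sqrt (1 + t) := by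
      rw [← Real.sqrt_mul (by linarith), show (1-t)*(1+t) = 1 - t^2 by ring]
    have h1 : (1:ℝ) ≤ Real.sqrt (1 + t) := by
      nlinarith [Real.sq_sqrt (show (0:ℝ) ≤ 1 + t by linarith), Real.sqrt_nonneg (1 + t)]
    have htj : |t| ^ j ≤ 1 := pow_le_one₀ (abs_nonneg t) (by rw [abs_le]; constructor <;> linarith)
    have hsp : 0 ≤ Real.sqrt (1 - t) := Real.sqrt_nonneg _
    rcases eq_or_lt_of_le ht'.2 with h | h
    · subst h
      norm_num
    · have hsp' : 0 < Real.sqrt (1 - t) := Real.sqrt_pos.2 (by linarith)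
      calc |t| ^ j / Real.sqrt (1 - t ^ 2) ≤ 1 / Real.sqrt (1 - t) := by
            apply div_le_div₀ (by norm_num) htj hsp'
            rw [hfac]
            exact le_mul_of_one_le_right hsp'.le h1
        _ = (Real.sqrt (1 - t))⁻¹ := one_div _
  exact hL.trans hR


lemma sqrt_one_sub_sq_deriv {x : ℝ} (hx : x ∈ Set.Ioo (-1:ℝ) 1) :
    HasDerivAt (fun t : ℝ => Real.sqrt (1 - t ^ 2)) (-x / Real.sqrt (1 - x ^ 2)) x := by
  have hpos : 0 < 1 - x ^ 2 := by
    obtain ⟨h1, h2⟩ := hx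
    nlinarith
  have hs : Real.sqrt (1 - x ^ 2) ≠ 0 := (Real.sqrt_pos.2 hpos).ne'
  have inner : HasDerivAt (fun t : ℝ => 1 - t ^ 2) (-(2 * x)) x := by
    simpa using ((hasDerivAt_pow 2 x).const_sub 1)
  have := (Real.hasDerivAt_sqrt hpos.ne').comp x inner
  refine this.congr_deriv ?_
  field_simp

lemma J0 : Jm 0 = π := by
  have h : Jm 0 = Real.arcsin 1 - Real.arcsin (-1) := by
    apply intervalIntegral.integral_eq_sub_of_hasDerivAt_of_le (by norm_num)
      Real.continuous_arcsin.continuousOn ?_ (intInt 0)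
    intro x hx
    simpa using Real.hasDerivAt_arcsin hx.1.ne' hx.2.ne
  rw [h, Real.arcsin_one, Real.arcsin_neg_one]
  ring

lemma J1 : Jm 1 = 0 := by
  have h : Jm 1 = (fun t : ℝ => -Real.sqrt (1 - t ^ 2)) 1 -
      (fun t : ℝ => -Real.sqrt (1 - t ^ 2)) (-1) := by
    apply intervalIntegral.integral_eq_sub_of_hasDerivAt_of_le (by norm_num)
      ((by fun_prop : Continuous fun t : ℝ => -Real.sqrt (1 - t ^ 2)).continuousOn) ?_ (intInt 1)
    intro x hx
    have := (sqrt_one_sub_sq_deriv hx).neg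
    convert this using 1
    · rfl
    · ring
  rw [h]
  norm_num

lemma Jrec (m : ℕ) : ((m:ℝ) + 2) * Jm (m + 2) = ((m:ℝ) + 1) * Jm m := by
  set F : ℝ → ℝ := fun t => t ^ (m + 1) * Real.sqrt (1 - t ^ 2) with hF
  have hderiv : ∀ x ∈ Set.Ioo (-1:ℝ) 1, HasDerivAt F
      (((m:ℝ) + 1) * (x ^ m / Real.sqrt (1 - x ^ 2)) -
        ((m:ℝ) + 2) * (x ^ (m + 2) / Real.sqrt (1 - x ^ 2))) x := by
    intro x hx
    have hpos : 0 < 1 - x ^ 2 := by obtain ⟨h1, h2⟩ := hx; nlinarith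
    have hs : Real.sqrt (1 - x ^ 2) ≠ 0 := (Real.sqrt_pos.2 hpos).ne'
    have hsq : Real.sqrt (1 - x ^ 2) ^ 2 = 1 - x ^ 2 := Real.sq_sqrt hpos.le
    have hss : Real.sqrt (1 - x ^ 2) * Real.sqrt (1 - x ^ 2) = 1 - x ^ 2 :=
      Real.mul_self_sqrt hpos.le
    have := (hasDerivAt_pow (m + 1) x).mul (sqrt_one_sub_sq_deriv hx)
    refine this.congr_deriv ?_
    rw [Nat.add_sub_cancel]
    field_simp
    push_cast
    linear_combination ((m:ℝ) + 1) * x ^ m * hsq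
  have hint : IntervalIntegrable
      (fun x : ℝ => ((m:ℝ) + 1) * (x ^ m / Real.sqrt (1 - x ^ 2)) -
        ((m:ℝ) + 2) * (x ^ (m + 2) / Real.sqrt (1 - x ^ 2))) volume (-1) 1 :=
    ((intInt m).const_mul _).sub ((intInt (m + 2)).const_mul _)
  have hcont : ContinuousOn F (Set.Icc (-1) 1) :=
    ((continuous_pow (m + 1)).mul (Real.continuous_sqrt.comp (by continuity))).continuousOn
  have key := intervalIntegral.integral_eq_sub_of_hasDerivAt_of_le (by norm_num : (-1:ℝ) ≤ 1)
    hcont hderiv hint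
  have hF1 : F 1 = 0 := by simp [hF]
  have hFm1 : F (-1) = 0 := by simp [hF]
  rw [hF1, hFm1, sub_zero] at key
  rw [intervalIntegral.integral_sub ((intInt m).const_mul _) ((intInt (m + 2)).const_mul _),
    intervalIntegral.integral_const_mul, intervalIntegral.integral_const_mul] at key
  have : ((m:ℝ) + 1) * Jm m - ((m:ℝ) + 2) * Jm (m + 2) = 0 := by
    simpa [Jm] using key
  linarith

lemma Jodd (k : ℕ) : Jm (2 * k + 1) = 0 := by
  induction k with
  | zero => simpa using J1
  | succ k ih =>
    have h := Jrec (2 * k + 1)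
    rw [show 2 * k + 1 + 2 = 2 * (k + 1) + 1 by ring] at h
    rw [ih, mul_zero] at h
    have h2 : ((2 * k + 1 : ℕ) : ℝ) + 2 ≠ 0 := by positivity
    exact (mul_eq_zero.1 h).resolve_left h2

lemma Jeven (k : ℕ) : Jm (2 * k) = π * ((2 * k).choose k : ℝ) / 4 ^ k := by
  induction k with
  | zero => simpa using J0
  | succ k ih =>
    have h := Jrec (2 * k)
    rw [show 2 * k + 2 = 2 * (k + 1) by ring, ih] at h
    have hnat : (k + 1) * ((2 * (k + 1)).choose (k + 1)) = 2 * (2 * k + 1) * ((2 * k).choose k) := by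
      have := Nat.succ_mul_centralBinom_succ k
      simpa [Nat.centralBinom, Nat.mul_succ, Nat.succ_eq_add_one] using this
    have hnat' : ((k:ℝ) + 1) * ((2 * (k + 1)).choose (k + 1) : ℝ) =
        2 * (2 * (k:ℝ) + 1) * ((2 * k).choose k : ℝ) := by exact_mod_cast hnat
    have h4 : (4:ℝ) ^ k ≠ 0 := by positivity
    have hk2 : ((2 * k : ℕ):ℝ) + 2 ≠ 0 := by positivity
    -- h : ((2k:ℝ)+2) * Jm (2(k+1)) = ((2k:ℝ)+1) * (π * C(2k,k)/4^k)
    have hcast : ((2 * k : ℕ):ℝ) = 2 * (k:ℝ) := by push_cast; ring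
    rw [hcast] at h
    have h2 : (2 * (k:ℝ) + 2) ≠ 0 := by positivity
    have hkey : (2 * (k:ℝ) + 2) * (Jm (2 * (k + 1)) * 4 ^ (k + 1)) =
        (2 * (k:ℝ) + 2) * (π * ((2 * (k + 1)).choose (k + 1) : ℝ)) := by
      have e1 : (2 * (k:ℝ) + 2) * (Jm (2 * (k + 1)) * 4 ^ (k + 1)) =
          ((2 * (k:ℝ) + 2) * Jm (2 * (k + 1))) * (4 ^ k * 4) := by
        rw [pow_succ]; ring
      rw [e1, h]
      field_simp
      linear_combination (-2 : ℝ) * hnat'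
    have hmain : Jm (2 * (k + 1)) * 4 ^ (k + 1) =
        π * ((2 * (k + 1)).choose (k + 1) : ℝ) := mul_left_cancel₀ h2 hkey
    rw [eq_div_iff (by positivity : ((4:ℝ) ^ (k + 1)) ≠ 0)]
    exact hmain


lemma evenSum (f : ℕ → ℝ) (hodd : ∀ k, f (2 * k + 1) = 0) (n : ℕ) :
    ∑ j ∈ Finset.range (n + 1), f j = ∑ k ∈ Finset.range (n / 2 + 1), f (2 * k) := by
  induction n with
  | zero => simp
  | succ n ih =>
    rw [Finset.sum_range_succ, ih]
    rcases Nat.even_or_odd (n + 1) with he | ho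
    · obtain ⟨m, hm⟩ := he
      have h1 : (n + 1) / 2 = m := by omega
      have h2 : n / 2 + 1 = m := by omega
      have h3 : n + 1 = 2 * m := by omega
      rw [h1, h3, ← h2]
      exact (Finset.sum_range_succ _ _).symm
    · obtain ⟨m, hm⟩ := ho
      have h0 : f (n + 1) = 0 := by rw [hm]; exact hodd m
      have h1 : (n + 1) / 2 = n / 2 := by omega
      rw [h0, h1, add_zero]

theorem momentIntegral (r : ℝ) (hr : 1 < r) (n : ℕ) :
    (∫ x in (2 * r - 1 - 2 * Real.sqrt (r * (r - 1)))..(2 * r - 1 + 2 * Real.sqrt (r * (r - 1))),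
        x ^ n / Real.sqrt (-x ^ 2 + 2 * (2 * r - 1) * x - 1)) =
    π * ∑ k ∈ Finset.range (n / 2 + 1),
      (n.choose (2 * k) : ℝ) * ((2 * k).choose k : ℝ) * (2 * r - 1) ^ (n - 2 * k) *
        (r * (r - 1)) ^ k := by
  set a : ℝ := 2 * r - 1 with ha
  set b : ℝ := 2 * Real.sqrt (r * (r - 1)) with hbdef
  have hprod : (0:ℝ) < r * (r - 1) := by nlinarith
  have hsq : Real.sqrt (r * (r - 1)) ^ 2 = r * (r - 1) := Real.sq_sqrt hprod.le
  have hb : 0 < b := by rw [hbdef]; positivity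
  have hb2 : b ^ 2 = 4 * (r * (r - 1)) := by rw [hbdef, mul_pow, hsq]; ring
  have hab : a ^ 2 - 1 = b ^ 2 := by rw [hb2, ha]; ring
  set f : ℝ → ℝ := fun x => x ^ n / Real.sqrt (-x ^ 2 + 2 * a * x - 1) with hf
  have key := intervalIntegral.integral_comp_mul_add (a := (-1:ℝ)) (b := (1:ℝ))
    (c := b) f (ne_of_gt hb) a
  rw [show b * (-1) + a = a - b by ring, show b * 1 + a = a + b by ring] at key
  have hpt : ∀ t : ℝ, f (b * t + a) = b⁻¹ * ((b * t + a) ^ n / Real.sqrt (1 - t ^ 2)) := by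
    intro t
    rw [hf]
    simp only []
    rw [show -(b * t + a) ^ 2 + 2 * a * (b * t + a) - 1 = b ^ 2 * (1 - t ^ 2) by
      linear_combination hab]
    rw [Real.sqrt_mul (sq_nonneg b), Real.sqrt_sq hb.le]
    ring
  have hexp : ∀ t : ℝ, (b * t + a) ^ n / Real.sqrt (1 - t ^ 2) =
      ∑ j ∈ Finset.range (n + 1),
        (n.choose j : ℝ) * a ^ (n - j) * b ^ j * (t ^ j / Real.sqrt (1 - t ^ 2)) := by
    intro t
    rw [add_pow, Finset.sum_div]
    exact Finset.sum_congr rfl fun j _ => by rw [mul_pow]; ring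
  have step1 : (∫ x in a - b..a + b, f x) = b * ∫ t in (-1:ℝ)..1, f (b * t + a) := by
    rw [key, smul_eq_mul, ← mul_assoc, mul_inv_cancel₀ hb.ne', one_mul]
  have step2 : (∫ t in (-1:ℝ)..1, f (b * t + a)) =
      b⁻¹ * ∫ t in (-1:ℝ)..1, (b * t + a) ^ n / Real.sqrt (1 - t ^ 2) := by
    rw [← intervalIntegral.integral_const_mul]
    exact intervalIntegral.integral_congr fun t _ => hpt t
  have step3 : (∫ t in (-1:ℝ)..1, (b * t + a) ^ n / Real.sqrt (1 - t ^ 2)) =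
      ∑ j ∈ Finset.range (n + 1), (n.choose j : ℝ) * a ^ (n - j) * b ^ j * Jm j := by
    rw [intervalIntegral.integral_congr fun t _ => hexp t]
    rw [intervalIntegral.integral_finset_sum (fun j _ => ((intInt j).const_mul _))]
    exact Finset.sum_congr rfl fun j _ => intervalIntegral.integral_const_mul _ _
  have step4 : (∑ j ∈ Finset.range (n + 1), (n.choose j : ℝ) * a ^ (n - j) * b ^ j * Jm j) =
      π * ∑ k ∈ Finset.range (n / 2 + 1),
        (n.choose (2 * k) : ℝ) * ((2 * k).choose k : ℝ) * a ^ (n - 2 * k) *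
          (r * (r - 1)) ^ k := by
    rw [evenSum _ (fun k => by rw [Jodd k]; ring) n, Finset.mul_sum]
    refine Finset.sum_congr rfl fun k _ => ?_
    rw [Jeven k]
    have hbk : b ^ (2 * k) = 4 ^ k * (r * (r - 1)) ^ k := by
      rw [pow_mul, hb2, mul_pow]
    rw [hbk]
    have h4 : ((4:ℝ) ^ k) ≠ 0 := by positivity
    field_simp
  rw [step1, step2, ← mul_assoc, mul_inv_cancel₀ hb.ne', one_mul, step3, step4]

/-- Moment representation of the shifted Legendre polynomials: for `r > 1`,
`P̃ₙ(r) = (1/π)·∫ xⁿ/√(−x²+2(2r−1)x−1) dx` over the interval where the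
quadratic is positive. -/
theorem shifted_legendre_moment_integral (r : ℝ) (hr : 1 < r) (n : ℕ) :
    ∑ k ∈ Finset.range (n + 1),
      (-1 : ℝ) ^ (n - k) * ((n + k).choose (2 * k) : ℝ) * ((2 * k).choose k : ℝ) * r ^ k =
    (1 / Real.pi) *
      ∫ x in (2 * r - 1 - 2 * Real.sqrt (r * (r - 1)))..(2 * r - 1 + 2 * Real.sqrt (r * (r - 1))),
        x ^ n / Real.sqrt (-x ^ 2 + 2 * (2 * r - 1) * x - 1) := by
  rw [momentIntegral r hr n, one_div, ← mul_assoc, inv_mul_cancel₀ Real.pi_ne_zero, one_mul]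
  have h1 := id1 n r (r - 1)
  rw [show r + (r - 1) = 2 * r - 1 by ring] at h1
  rw [← id2 n r]
  exact h1.symm
end

section
/- Let r ∈ ℝ and n ∈ ℕ. Let P_m(r) = ∑_{k=0}^{m} (−1)ᵏ·C(m,k)²·((1+r)/2)^{m−k}·((1−r)/2)ᵏ denote the Legendre polynomials evaluated at r. Then the determinant of the (n+1)×(n+1) Hankel matrix whose (i,j) entry is P_{i+j}(r) for 0 ≤ i,j ≤ n equals (r²−1)^{n(n+1)/2} / 2^{n²}. -/
open Polynomial Finset Matrix

namespace HankelLeg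

noncomputable def Pl (r : ℝ) (m : ℕ) : ℝ :=
  ∑ k ∈ Finset.range (m + 1),
      (-1 : ℝ) ^ k * ((m.choose k : ℝ)) ^ 2 * ((1 + r) / 2) ^ (m - k) * ((1 - r) / 2) ^ k

noncomputable def qq (r : ℝ) : ℝ := (r ^ 2 - 1) / 4

noncomputable def MM (r : ℝ) (t : ℕ) : ℝ :=
  if t % 2 = 0 then (t.choose (t / 2) : ℝ) * (qq r) ^ (t / 2) else 0

noncomputable def gg (r : ℝ) (m j : ℕ) : ℝ :=
  if j ≤ m ∧ (m - j) % 2 = 0 then 2 * (m.choose ((m - j) / 2) : ℝ) * (qq r) ^ ((m + j) / 2)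
  else 0

noncomputable def Lam (r : ℝ) (N : ℕ) (f : ℝ[X]) : ℝ := ∑ i ∈ range N, f.coeff i * Pl r i

lemma coeff_aux (x y : ℝ) (m j : ℕ) :
    ((C x + C y * X : ℝ[X]) ^ m).coeff j = x ^ (m - j) * y ^ j * (m.choose j : ℝ) := by
  rw [add_pow, finset_sum_coeff]
  have hterm : ∀ k, ((C x) ^ k * (C y * X) ^ (m - k) * ((m.choose k : ℕ) : ℝ[X])).coeff j
      = if j = m - k then x ^ k * y ^ (m - k) * (m.choose k : ℝ) else 0 := by
    intro k
    have h : (C x) ^ k * (C y * X) ^ (m - k) * ((m.choose k : ℕ) : ℝ[X])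
        = C (x ^ k * y ^ (m - k) * (m.choose k : ℝ)) * X ^ (m - k) := by
      rw [mul_pow, ← C_pow, ← C_pow, ← C_eq_natCast, C_mul, C_mul]
      ring
    rw [h, coeff_C_mul, coeff_X_pow]
    split <;> simp
  simp_rw [hterm]
  by_cases hj : j ≤ m
  · rw [Finset.sum_eq_single (m - j)]
    · rw [if_pos (by omega : j = m - (m - j))]
      have h1 : m - (m - j) = j := by omega
      rw [h1, Nat.choose_symm hj]
    · intro k hk hne
      simp only [Finset.mem_range] at hk
      rw [if_neg]
      intro h; exact hne (by omega)
    · intro h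
      exact absurd (Finset.mem_range.mpr (by omega)) h
  · rw [Finset.sum_eq_zero, Nat.choose_eq_zero_of_lt (by omega)]
    · simp
    · intro k hk
      simp only [Finset.mem_range] at hk
      rw [if_neg]
      omega

lemma Pl_eq (r : ℝ) (m : ℕ) :
    Pl r m = ∑ u ∈ range (m + 1),
      (m.choose u : ℝ) * ((m - u).choose u : ℝ) * qq r ^ u * r ^ (m - 2 * u) := by
  set a := (1 + r) / 2 with ha
  set b := (1 - r) / 2 with hb
  have lhs_eq : Pl r m = (((C a + C (-b) * X : ℝ[X])) ^ m * ((C 1 + C 1 * X : ℝ[X])) ^ m).coeff m := by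
    rw [coeff_mul, Finset.Nat.sum_antidiagonal_eq_sum_range_succ_mk]
    unfold Pl
    refine Finset.sum_congr rfl ?_
    intro k hk
    simp only [Finset.mem_range] at hk
    rw [coeff_aux, coeff_aux, Nat.choose_symm (by omega)]
    rw [neg_pow b]
    ring
  have hT : ((C a + C (-b) * X : ℝ[X]) * (C 1 + C 1 * X)) = C a + (C r + C (-b) * X) * X := by
    have h1 : a + -b = r := by rw [ha, hb]; ring
    rw [← h1, C_add]
    simp only [C_1, one_mul, mul_one]
    ring
  have hq : a * -b = qq r := by rw [ha, hb, qq]; ring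
  rw [lhs_eq, ← mul_pow, hT, add_pow, finset_sum_coeff]
  refine Finset.sum_congr rfl ?_
  intro k hk
  simp only [Finset.mem_range] at hk
  have h2 : (C a : ℝ[X]) ^ k * ((C r + C (-b) * X) * X) ^ (m - k) * ((m.choose k : ℕ) : ℝ[X])
      = C (a ^ k * (m.choose k : ℝ)) * ((C r + C (-b) * X) ^ (m - k) * X ^ (m - k)) := by
    rw [mul_pow, ← C_pow, ← C_eq_natCast, C_mul]
    ring
  rw [h2, coeff_C_mul, coeff_mul_X_pow', if_pos (by omega : m - k ≤ m)]
  have h3 : m - (m - k) = k := by omega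
  rw [h3, coeff_aux]
  have he : m - k - k = m - 2 * k := by omega
  rw [he, ← hq, mul_pow]
  ring

lemma alt_sum (d : ℕ) :
    ∑ w ∈ range (d + 1), (-1 : ℝ) ^ w * (d.choose w : ℝ) = if d = 0 then 1 else 0 := by
  have h := add_pow (-1 : ℝ) 1 d
  simp only [one_pow, mul_one, neg_add_cancel] at h
  rw [zero_pow_eq] at h
  rw [← h]

lemma collapse (t s : ℕ) :
    ∑ i ∈ range (t + 1), (-1 : ℝ) ^ (t - i) * (t.choose i : ℝ) * (i.choose s : ℝ)
      = if s = t then 1 else 0 := by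
  by_cases hs : s ≤ t
  · have hdrop : ∑ i ∈ range (t + 1), (-1 : ℝ) ^ (t - i) * (t.choose i : ℝ) * (i.choose s : ℝ)
        = ∑ i ∈ Ico s (t + 1), (-1 : ℝ) ^ (t - i) * (t.choose i : ℝ) * (i.choose s : ℝ) := by
      refine (Finset.sum_subset ?_ ?_).symm
      · intro i hi
        simp only [Finset.mem_Ico] at hi
        exact Finset.mem_range.mpr hi.2
      · intro i hi hni
        simp only [Finset.mem_range, Finset.mem_Ico] at hi hni
        have : i < s := by omega
        rw [Nat.choose_eq_zero_of_lt this]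
        simp
    rw [hdrop, Finset.sum_Ico_eq_sum_range]
    have hlen : t + 1 - s = (t - s) + 1 := by omega
    rw [hlen]
    have hterm : ∀ w ∈ range (t - s + 1),
        (-1 : ℝ) ^ (t - (s + w)) * (t.choose (s + w) : ℝ) * ((s + w).choose s : ℝ)
        = ((t.choose s : ℝ) * (-1) ^ (t - s)) * ((-1 : ℝ) ^ w * ((t - s).choose w : ℝ)) := by
      intro w hw
      simp only [Finset.mem_range] at hw
      have h1 : t.choose (s + w) * (s + w).choose s = t.choose s * (t - s).choose w := by
        have := Nat.choose_mul (n := t) (show s ≤ s + w by omega)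
        simpa [Nat.add_sub_cancel_left] using this
      have hw2 : ((-1 : ℝ) ^ w) * ((-1 : ℝ) ^ w) = 1 := by
        rw [← pow_add, ← two_mul, pow_mul]; norm_num
      have h3 : ((-1 : ℝ)) ^ (t - (s + w)) * (-1) ^ w = (-1) ^ (t - s) := by
        rw [← pow_add]; congr 1; omega
      have h2 : (-1 : ℝ) ^ (t - (s + w)) = (-1) ^ (t - s) * (-1) ^ w := by
        calc (-1 : ℝ) ^ (t - (s + w)) = (-1 : ℝ) ^ (t - (s + w)) * (((-1:ℝ)^w) * ((-1:ℝ)^w)) := by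
              rw [hw2, mul_one]
          _ = ((-1 : ℝ) ^ (t - (s + w)) * (-1:ℝ)^w) * (-1:ℝ)^w := by ring
          _ = (-1 : ℝ) ^ (t - s) * (-1) ^ w := by rw [h3]
      have h1' : ((t.choose (s + w)) : ℝ) * ((s + w).choose s : ℝ)
          = (t.choose s : ℝ) * ((t - s).choose w : ℝ) := by exact_mod_cast h1
      rw [h2]
      linear_combination ((-1:ℝ)^(t-s) * (-1)^w) * h1'
    rw [Finset.sum_congr rfl hterm, ← Finset.mul_sum, alt_sum]
    by_cases hst : s = t
    · subst hst; simp
    · rw [if_neg (by omega : ¬ t - s = 0), if_neg hst]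
      simp
  · rw [if_neg (by omega)]
    refine Finset.sum_eq_zero ?_
    intro i hi
    simp only [Finset.mem_range] at hi
    rw [Nat.choose_eq_zero_of_lt (show i < s by omega)]
    simp

lemma momB (r : ℝ) (t : ℕ) :
    ∑ i ∈ range (t + 1), (t.choose i : ℝ) * (-r) ^ (t - i) * Pl r i = MM r t := by
  have step1 : ∀ i ∈ range (t + 1),
      (t.choose i : ℝ) * (-r) ^ (t - i) * Pl r i
      = ∑ u ∈ range (t + 1), (-1 : ℝ) ^ (t - i) * (t.choose i : ℝ) * (i.choose (2 * u) : ℝ)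
          * (((2 * u).choose u : ℝ) * qq r ^ u * r ^ (t - 2 * u)) := by
    intro i hi
    simp only [Finset.mem_range] at hi
    rw [Pl_eq, Finset.mul_sum]
    rw [Finset.sum_subset (Finset.range_subset_range.mpr (show i + 1 ≤ t + 1 by omega))
      (f := fun u => (t.choose i : ℝ) * (-r) ^ (t - i) *
        ((i.choose u : ℝ) * ((i - u).choose u : ℝ) * qq r ^ u * r ^ (i - 2 * u)))
      (fun u hu hnu => by
        simp only [Finset.mem_range] at hu hnu
        rw [Nat.choose_eq_zero_of_lt (show i < u by omega)]
        simp)]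
    refine Finset.sum_congr rfl ?_
    intro u hu
    simp only [Finset.mem_range] at hu
    by_cases h2u : 2 * u ≤ i
    · have hcm : i.choose (2 * u) * (2 * u).choose u = i.choose u * (i - u).choose u := by
        have h0 : 2 * u - u = u := by omega
        have := Nat.choose_mul (n := i) (show u ≤ 2 * u by omega)
        rw [this, h0]
      have hcm' : (i.choose u : ℝ) * ((i - u).choose u : ℝ)
          = (i.choose (2 * u) : ℝ) * ((2 * u).choose u : ℝ) := by exact_mod_cast hcm.symm
      have hrp : (-r : ℝ) ^ (t - i) = (-1) ^ (t - i) * r ^ (t - i) := by rw [neg_pow]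
      have hre : r ^ (t - i) * r ^ (i - 2 * u) = r ^ (t - 2 * u) := by
        rw [← pow_add]; congr 1; omega
      rw [hrp]
      calc (t.choose i : ℝ) * ((-1) ^ (t - i) * r ^ (t - i)) *
            ((i.choose u : ℝ) * ((i - u).choose u : ℝ) * qq r ^ u * r ^ (i - 2 * u))
          = (-1 : ℝ) ^ (t - i) * (t.choose i : ℝ) *
              ((i.choose u : ℝ) * ((i - u).choose u : ℝ)) * qq r ^ u *
              (r ^ (t - i) * r ^ (i - 2 * u)) := by ring
        _ = _ := by rw [hcm', hre]; ring
    · have hz1 : (i.choose u : ℝ) * ((i - u).choose u : ℝ) = 0 := by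
        by_cases hui : u ≤ i
        · rw [Nat.choose_eq_zero_of_lt (show i - u < u by omega)]
          simp
        · rw [Nat.choose_eq_zero_of_lt (show i < u by omega)]
          simp
      rw [Nat.choose_eq_zero_of_lt (show i < 2 * u by omega)]
      rw [hz1]
      push_cast
      ring
  rw [Finset.sum_congr rfl step1, Finset.sum_comm]
  have step2 : ∀ u ∈ range (t + 1),
      ∑ i ∈ range (t + 1), (-1 : ℝ) ^ (t - i) * (t.choose i : ℝ) * (i.choose (2 * u) : ℝ)
          * (((2 * u).choose u : ℝ) * qq r ^ u * r ^ (t - 2 * u))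
      = (if 2 * u = t then 1 else 0) * (((2 * u).choose u : ℝ) * qq r ^ u * r ^ (t - 2 * u)) := by
    intro u _
    rw [← Finset.sum_mul, collapse]
  rw [Finset.sum_congr rfl step2]
  by_cases ht : t % 2 = 0
  · obtain ⟨v, hv⟩ : ∃ v, t = 2 * v := ⟨t / 2, by omega⟩
    subst hv
    rw [Finset.sum_eq_single v]
    · rw [if_pos rfl, MM, if_pos (by omega : 2 * v % 2 = 0)]
      have : 2 * v - 2 * v = 0 := by omega
      rw [this, pow_zero]
      have h2 : 2 * v / 2 = v := by omega
      rw [h2]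
      ring
    · intro u hu hne
      rw [if_neg (by omega)]
      ring
    · intro h
      exact absurd (Finset.mem_range.mpr (by omega)) h
  · rw [MM, if_neg ht]
    refine Finset.sum_eq_zero ?_
    intro u hu
    rw [if_neg (fun h => ht (by omega))]
    ring

lemma lam_sub (r N) (f g : ℝ[X]) : Lam r N (f - g) = Lam r N f - Lam r N g := by
  simp [Lam, sub_mul, Finset.sum_sub_distrib]

lemma lam_Cmul (r N c) (f : ℝ[X]) : Lam r N (C c * f) = c * Lam r N f := by
  simp [Lam, coeff_C_mul, Finset.mul_sum, mul_assoc]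

lemma lam_sum (r N) {ι : Type*} (s : Finset ι) (F : ι → ℝ[X]) :
    Lam r N (∑ i ∈ s, F i) = ∑ i ∈ s, Lam r N (F i) := by
  simp only [Lam, finset_sum_coeff, Finset.sum_mul]
  rw [Finset.sum_comm]

lemma lam_monomial (r N t) (c : ℝ) (h : t < N) : Lam r N (monomial t c) = c * Pl r t := by
  simp only [Lam, coeff_monomial, ite_mul, zero_mul]
  rw [Finset.sum_ite_eq (range N) t (fun i => c * Pl r i)]
  rw [if_pos (Finset.mem_range.mpr h)]

lemma lam_sub_pow (r : ℝ) {N t : ℕ} (h : t < N) :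
    Lam r N ((X - C r) ^ t) = MM r t := by
  have hx : (X - C r : ℝ[X]) = C (-r) + C 1 * X := by
    rw [C_neg, C_1]; ring
  rw [hx, ← momB r t]
  unfold Lam
  calc ∑ i ∈ range N, ((C (-r) + C 1 * X : ℝ[X]) ^ t).coeff i * Pl r i
      = ∑ i ∈ range N, (t.choose i : ℝ) * (-r) ^ (t - i) * Pl r i := by
        refine Finset.sum_congr rfl ?_
        intro i _
        rw [coeff_aux]
        ring
    _ = ∑ i ∈ range (t + 1), (t.choose i : ℝ) * (-r) ^ (t - i) * Pl r i := by
        refine (Finset.sum_subset (Finset.range_subset_range.mpr (show t + 1 ≤ N by omega)) ?_).symm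
        intro i hi hni
        simp only [Finset.mem_range] at hi hni
        rw [Nat.choose_eq_zero_of_lt (show t < i by omega)]
        simp

lemma dickson_deg_coeff (a : ℝ) (j : ℕ) :
    (dickson 1 a j).natDegree ≤ j ∧ (dickson 1 a j).coeff j = if j = 0 then 2 else 1 := by
  induction j using Nat.twoStepInduction with
  | zero =>
    have h0 : dickson 1 a 0 = C 2 := by
      rw [dickson_zero]
      norm_num
      exact (map_ofNat C 2).symm
    rw [h0]
    constructor
    · simp
    · simp
  | one =>
    rw [dickson_one]
    constructor
    · simp
    · simp
  | more j ih1 ih2 =>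
    rw [dickson_add_two]
    constructor
    · refine le_trans (natDegree_sub_le _ _) (max_le ?_ ?_)
      · refine le_trans (natDegree_mul_le) ?_
        have h1 := ih2.1
        rw [natDegree_X]
        omega
      · refine le_trans (natDegree_mul_le) ?_
        have h1 := ih1.1
        rw [natDegree_C]
        omega
    · rw [coeff_sub, coeff_C_mul]
      rw [coeff_eq_zero_of_natDegree_lt (lt_of_le_of_lt ih1.1 (by omega))]
      have : (X * dickson 1 a (j + 1)).coeff (j + 2) = (dickson 1 a (j + 1)).coeff (j + 1) := by
        rw [coeff_X_mul]
      rw [this, ih2.2]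
      simp

lemma gg_rec (r : ℝ) (m j : ℕ) :
    gg r m (j + 2) = gg r (m + 1) (j + 1) - qq r * gg r m j := by
  unfold gg
  by_cases hC : j ≤ m ∧ (m - j) % 2 = 0
  · obtain ⟨hjm, hpar⟩ := hC
    by_cases hA : j + 2 ≤ m
    · rw [if_pos ⟨hA, by omega⟩, if_pos ⟨by omega, by omega⟩, if_pos ⟨hjm, hpar⟩]
      obtain ⟨w, hw⟩ : ∃ w, (m - j) / 2 = w + 1 := ⟨(m - j) / 2 - 1, by omega⟩
      have e1 : (m - (j + 2)) / 2 = w := by omega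
      have e2 : (m + 1 - (j + 1)) / 2 = w + 1 := by omega
      have e3 : (m + (j + 2)) / 2 = (m + j) / 2 + 1 := by omega
      have e4 : (m + 1 + (j + 1)) / 2 = (m + j) / 2 + 1 := by omega
      have hp : (m + 1).choose (w + 1) = m.choose w + m.choose (w + 1) :=
        Nat.choose_succ_succ m w
      rw [e1, e2, e3, e4, hw]
      have hp' : ((m + 1).choose (w + 1) : ℝ) = (m.choose w : ℝ) + (m.choose (w + 1) : ℝ) := by
        exact_mod_cast hp
      rw [hp', pow_succ]
      ring
    · have hmj : m = j := by omega
      subst hmj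
      rw [if_neg (by omega), if_pos ⟨by omega, by omega⟩, if_pos ⟨le_refl m, by omega⟩]
      have e1 : (m + 1 - (m + 1)) / 2 = 0 := by omega
      have e2 : (m - m) / 2 = 0 := by omega
      have e3 : (m + 1 + (m + 1)) / 2 = m + 1 := by omega
      have e4 : (m + m) / 2 = m := by omega
      rw [e1, e2, e3, e4]
      simp [pow_succ]
      ring
  · rw [if_neg (fun h => hC ⟨by omega, by omega⟩),
        if_neg (fun h => hC ⟨by omega, by omega⟩),
        if_neg hC]
    ring

lemma Phi_g (r : ℝ) {N : ℕ} (j : ℕ) : ∀ m, m + j < N →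
    Lam r N ((X ^ m * dickson 1 (qq r) j).comp (X - C r)) = gg r m j := by
  induction j using Nat.twoStepInduction with
  | zero =>
    intro m hm
    have h0 : dickson 1 (qq r) 0 = C 2 := by
      rw [dickson_zero]
      norm_num
      exact (map_ofNat C 2).symm
    rw [h0]
    have : (X ^ m * C 2 : ℝ[X]).comp (X - C r) = C 2 * (X - C r) ^ m := by
      simp only [mul_comp, pow_comp, X_comp, C_comp]
      ring
    rw [this, lam_Cmul, lam_sub_pow r (show m < N by omega)]
    unfold MM gg
    by_cases hpar : m % 2 = 0
    · rw [if_pos hpar, if_pos ⟨by omega, by omega⟩]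
      have : (m + 0) / 2 = m / 2 := by omega
      rw [this]
      have : m - 0 = m := by omega
      rw [this]
      ring
    · rw [if_neg hpar, if_neg (fun h => hpar (by omega))]
      ring
  | one =>
    intro m hm
    rw [dickson_one]
    have : (X ^ m * X : ℝ[X]).comp (X - C r) = (X - C r) ^ (m + 1) := by
      simp [mul_comp, pow_comp, pow_succ]
    rw [this, lam_sub_pow r (show m + 1 < N by omega)]
    unfold MM gg
    rcases Nat.eq_zero_or_pos m with hm0 | hm0
    · subst hm0
      norm_num
    · by_cases hpar : (m + 1) % 2 = 0
      · rw [if_pos hpar, if_pos ⟨hm0, by omega⟩]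
        obtain ⟨v, hv⟩ : ∃ v, (m + 1) / 2 = v + 1 := ⟨(m + 1) / 2 - 1, by omega⟩
        have e1 : (m - 1) / 2 = v := by omega
        rw [e1, hv]
        have hid : (m + 1).choose (v + 1) = 2 * m.choose v := by
          have h1 : (m + 1).choose (v + 1) = m.choose v + m.choose (v + 1) :=
            Nat.choose_succ_succ m v
          have h2 : m.choose (v + 1) = m.choose v := by
            rw [← Nat.choose_symm (show v + 1 ≤ m by omega)]
            congr 1
            omega
          omega
        have hid' : ((m + 1).choose (v + 1) : ℝ) = 2 * (m.choose v : ℝ) := by exact_mod_cast hid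
        rw [hid']
      · rw [if_neg hpar, if_neg (fun h => hpar (by omega))]
  | more j ih1 ih2 =>
    intro m hm
    have hsplit : (X ^ m * dickson 1 (qq r) (j + 2) : ℝ[X])
        = X ^ (m + 1) * dickson 1 (qq r) (j + 1) - C (qq r) * (X ^ m * dickson 1 (qq r) j) := by
      rw [dickson_add_two]
      ring
    have I2 := ih2 (m + 1) (by omega)
    have I1 := ih1 m (by omega)
    rw [hsplit]
    simp only [sub_comp, mul_comp, pow_comp, X_comp, C_comp] at I2 I1 ⊢
    rw [lam_sub, lam_Cmul, I2, I1, gg_rec]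

lemma lam_mul (r : ℝ) (n : ℕ) (f h : ℝ[X]) (hf : f.natDegree < n + 1)
    (hh : h.natDegree < n + 1) :
    Lam r (2 * n + 2) (f * h)
      = ∑ i ∈ range (n + 1), ∑ j ∈ range (n + 1), f.coeff i * h.coeff j * Pl r (i + j) := by
  conv_lhs => rw [f.as_sum_range' (n + 1) hf, h.as_sum_range' (n + 1) hh]
  rw [Finset.sum_mul_sum, lam_sum]
  refine Finset.sum_congr rfl ?_
  intro i hi
  rw [lam_sum]
  refine Finset.sum_congr rfl ?_
  intro j hj
  simp only [Finset.mem_range] at hi hj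
  rw [monomial_mul_monomial, lam_monomial r _ _ _ (show i + j < 2 * n + 2 by omega)]

lemma phiDD (r : ℝ) (n : ℕ) (k l : ℕ) (hkl : k ≤ l) (hl : l ≤ n) :
    Lam r (2 * n + 2) ((dickson 1 (qq r) k * dickson 1 (qq r) l).comp (X - C r))
    = if k = l then (if k = 0 then 2 else 1) * (2 * qq r ^ k) else 0 := by
  have hdegk := (dickson_deg_coeff (qq r) k).1
  conv_lhs => rw [(dickson 1 (qq r) k).as_sum_range' (k + 1) (by omega)]
  rw [Finset.sum_mul, Polynomial.sum_comp, lam_sum]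
  have hterm : ∀ m ∈ range (k + 1),
      Lam r (2 * n + 2) ((monomial m ((dickson 1 (qq r) k).coeff m) * dickson 1 (qq r) l).comp
        (X - C r))
      = (dickson 1 (qq r) k).coeff m * gg r m l := by
    intro m hm
    simp only [Finset.mem_range] at hm
    have : (monomial m ((dickson 1 (qq r) k).coeff m) * dickson 1 (qq r) l : ℝ[X])
        = C ((dickson 1 (qq r) k).coeff m) * (X ^ m * dickson 1 (qq r) l) := by
      rw [← C_mul_X_pow_eq_monomial]
      ring
    rw [this, mul_comp, C_comp, lam_Cmul, Phi_g r l m (show m + l < 2 * n + 2 by omega)]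
  rw [Finset.sum_congr rfl hterm]
  rcases Nat.lt_or_ge k l with hlt | hge
  · rw [if_neg (by omega)]
    refine Finset.sum_eq_zero ?_
    intro m hm
    simp only [Finset.mem_range] at hm
    rw [gg, if_neg (by omega)]
    ring
  · have hkeq : k = l := by omega
    subst hkeq
    rw [if_pos rfl, Finset.sum_range_succ]
    have hz : ∀ m ∈ range k, (dickson 1 (qq r) k).coeff m * gg r m k = 0 := by
      intro m hm
      simp only [Finset.mem_range] at hm
      rw [gg, if_neg (by omega)]
      ring
    rw [Finset.sum_eq_zero hz, zero_add, (dickson_deg_coeff (qq r) k).2]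
    unfold gg
    rw [if_pos (⟨le_refl k, by omega⟩ : k ≤ k ∧ (k - k) % 2 = 0)]
    have e1 : (k - k) / 2 = 0 := by omega
    have e2 : (k + k) / 2 = k := by omega
    rw [e1, e2]
    simp

lemma pc_deg_le (r : ℝ) (k : ℕ) : ((dickson 1 (qq r) k).comp (X - C r)).natDegree ≤ k := by
  refine le_trans natDegree_comp_le ?_
  rw [natDegree_X_sub_C]
  have := (dickson_deg_coeff (qq r) k).1
  omega

lemma pc_coeff_diag (r : ℝ) (k : ℕ) :
    ((dickson 1 (qq r) k).comp (X - C r)).coeff k = if k = 0 then 2 else 1 := by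
  rcases Nat.eq_zero_or_pos k with h0 | hk
  · subst h0
    have h0 : dickson 1 (qq r) 0 = C 2 := by
      rw [dickson_zero]
      norm_num
      exact (map_ofNat C 2).symm
    rw [h0, C_comp]
    simp
  · have hdeg : (dickson 1 (qq r) k).natDegree = k := by
      refine le_antisymm (dickson_deg_coeff (qq r) k).1 ?_
      refine le_natDegree_of_ne_zero ?_
      rw [(dickson_deg_coeff (qq r) k).2, if_neg (by omega)]
      norm_num
    have hcompdeg : ((dickson 1 (qq r) k).comp (X - C r)).natDegree = k := by
      rw [natDegree_comp, hdeg, natDegree_X_sub_C, mul_one]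
    have hlc : ((dickson 1 (qq r) k).comp (X - C r)).leadingCoeff = 1 := by
      rw [leadingCoeff_comp (by rw [natDegree_X_sub_C]; omega)]
      have : (dickson 1 (qq r) k).leadingCoeff = 1 := by
        rw [leadingCoeff, hdeg, (dickson_deg_coeff (qq r) k).2, if_neg (by omega)]
      rw [this, (monic_X_sub_C r).leadingCoeff]
      simp
    rw [if_neg (by omega)]
    have := coeff_natDegree (p := (dickson 1 (qq r) k).comp (X - C r))
    rw [hcompdeg] at this
    rw [this, hlc]

end HankelLeg

open HankelLeg Polynomial Finset Matrix in
/-- The Hankel transform of the sequence of Legendre polynomial values `Pₘ(r)` is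
`hₙ = (r²−1)^(n(n+1)/2) / 2^(n²)`. -/
theorem hankel_legendre (r : ℝ) (n : ℕ) (P : ℕ → ℝ)
    (hP : ∀ m, P m = ∑ k ∈ Finset.range (m + 1),
      (-1 : ℝ) ^ k * ((m.choose k : ℝ)) ^ 2 * ((1 + r) / 2) ^ (m - k) * ((1 - r) / 2) ^ k) :
    Matrix.det (Matrix.of fun i j : Fin (n + 1) => P ((i : ℕ) + (j : ℕ))) =
      (r ^ 2 - 1) ^ (n * (n + 1) / 2) / 2 ^ (n ^ 2) := by
  classical
  set q := qq r with hqdef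
  set pc : ℕ → ℝ[X] := fun k => (dickson 1 (qq r) k).comp (X - C r) with hpc
  set H : Matrix (Fin (n + 1)) (Fin (n + 1)) ℝ :=
    Matrix.of (fun i j : Fin (n + 1) => Pl r ((i : ℕ) + (j : ℕ))) with hHdef
  have hH : (Matrix.of fun i j : Fin (n + 1) => P ((i : ℕ) + (j : ℕ))) = H := by
    ext i j
    simp only [Matrix.of_apply, hHdef]
    rw [hP]
    rfl
  rw [hH]
  set V : Matrix (Fin (n + 1)) (Fin (n + 1)) ℝ :=
    Matrix.of (fun k i : Fin (n + 1) => (pc (k : ℕ)).coeff (i : ℕ)) with hVdef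
  set dd : Fin (n + 1) → ℝ :=
    (fun k : Fin (n + 1) => (if (k : ℕ) = 0 then 2 else 1) * (2 * q ^ (k : ℕ))) with hdd
  -- the key diagonalization
  have key : V * H * Vᵀ = Matrix.diagonal dd := by
    ext k l
    rw [Matrix.mul_apply]
    simp only [Matrix.mul_apply, Matrix.transpose_apply]
    have step1 : ∑ j : Fin (n + 1), (∑ i : Fin (n + 1), V k i * H i j) * V l j
        = ∑ j ∈ range (n + 1),
            (∑ i ∈ range (n + 1), (pc (k : ℕ)).coeff i * Pl r (i + j)) * (pc (l : ℕ)).coeff j := by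
      simp only [hVdef, hHdef, Matrix.of_apply]
      rw [← Fin.sum_univ_eq_sum_range
        (fun j => (∑ i ∈ range (n + 1), (pc (k : ℕ)).coeff i * Pl r (i + j)) * (pc (l : ℕ)).coeff j)
        (n + 1)]
      refine Finset.sum_congr rfl ?_
      intro j _
      congr 1
      rw [← Fin.sum_univ_eq_sum_range (fun i => (pc (k : ℕ)).coeff i * Pl r (i + (j : ℕ))) (n + 1)]
    rw [step1]
    have step2 : ∑ j ∈ range (n + 1),
            (∑ i ∈ range (n + 1), (pc (k : ℕ)).coeff i * Pl r (i + j)) * (pc (l : ℕ)).coeff j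
        = ∑ i ∈ range (n + 1), ∑ j ∈ range (n + 1),
            (pc (k : ℕ)).coeff i * (pc (l : ℕ)).coeff j * Pl r (i + j) := by
      rw [Finset.sum_comm]
      refine Finset.sum_congr rfl ?_
      intro i _
      rw [Finset.sum_mul]
      refine Finset.sum_congr rfl ?_
      intro j _
      ring
    rw [step2, ← lam_mul r n _ _
      (by show ((dickson 1 (qq r) ((k : ℕ))).comp (X - C r)).natDegree < n + 1
          have := pc_deg_le r (k : ℕ); have hk := k.isLt; omega)
      (by show ((dickson 1 (qq r) ((l : ℕ))).comp (X - C r)).natDegree < n + 1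
          have := pc_deg_le r (l : ℕ); have hl := l.isLt; omega)]
    have hcomp : pc (k : ℕ) * pc (l : ℕ)
        = (dickson 1 (qq r) (k : ℕ) * dickson 1 (qq r) (l : ℕ)).comp (X - C r) := by
      rw [mul_comp]
    rw [hcomp]
    rcases le_or_gt (k : ℕ) (l : ℕ) with hkl | hkl
    · rw [phiDD r n _ _ hkl (by omega)]
      rw [Matrix.diagonal_apply]
      by_cases hkeq : k = l
      · rw [if_pos (by exact_mod_cast congrArg Fin.val hkeq), if_pos hkeq, hdd]
      · rw [if_neg (fun h => hkeq (Fin.ext h)), if_neg hkeq]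
    · rw [mul_comm (dickson 1 (qq r) (k : ℕ)) (dickson 1 (qq r) (l : ℕ))]
      rw [phiDD r n _ _ (le_of_lt hkl) (by omega)]
      rw [if_neg (by omega), Matrix.diagonal_apply, if_neg (fun h => by
        rw [h] at hkl; exact lt_irrefl _ hkl)]
  -- triangularity of V
  have hVtri : V.BlockTriangular OrderDual.toDual := by
    intro i j hij
    have hij' : (i : ℕ) < (j : ℕ) := hij
    simp only [hVdef, Matrix.of_apply]
    exact coeff_eq_zero_of_natDegree_lt (lt_of_le_of_lt (pc_deg_le r _) hij')
  have hdetV : V.det = 2 := by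
    rw [Matrix.det_of_lowerTriangular V hVtri]
    have hdiag : ∀ k : Fin (n + 1), V k k = if (k : ℕ) = 0 then 2 else 1 := by
      intro k
      simp only [hVdef, Matrix.of_apply]
      exact pc_coeff_diag r _
    rw [Finset.prod_congr rfl (fun k _ => hdiag k)]
    rw [Fin.prod_univ_succ]
    simp
  -- determinant of the diagonal matrix
  set S : ℕ := ∑ i ∈ range n, (i + 1) with hSdef
  have hS2 : S * 2 = n * (n + 1) := by
    have h1 : ∑ i ∈ range (n + 1), i = S + 0 := by
      rw [Finset.sum_range_succ']
    have h2 := Finset.sum_range_id_mul_two (n + 1)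
    rw [h1] at h2
    simpa [mul_comm] using h2
  have hdetD : (Matrix.diagonal dd).det = 4 * (2 ^ n * q ^ S) := by
    rw [Matrix.det_diagonal, Fin.prod_univ_succ]
    have h0 : dd 0 = 4 := by simp [hdd]; norm_num
    have hsucc : ∀ i : Fin n, dd i.succ = 2 * q ^ ((i : ℕ) + 1) := by
      intro i
      simp [hdd, Fin.val_succ]
    rw [h0, Finset.prod_congr rfl (fun i _ => hsucc i)]
    rw [Fin.prod_univ_eq_prod_range (fun i => 2 * q ^ (i + 1)) n]
    rw [Finset.prod_mul_distrib, Finset.prod_const, Finset.prod_pow_eq_pow_sum,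
      Finset.card_range]
  -- conclude
  have hdet1 : V.det * H.det * V.det = 4 * (2 ^ n * q ^ S) := by
    rw [← hdetD, ← key, Matrix.det_mul, Matrix.det_mul, Matrix.det_transpose]
  rw [hdetV] at hdet1
  have hdetH : H.det = 2 ^ n * q ^ S := by linarith
  rw [hdetH]
  have hSE : n * (n + 1) / 2 = S := by
    rw [← hS2, Nat.mul_div_cancel S (by norm_num)]
  rw [hSE]
  have h2S : n ^ 2 + n = 2 * S := by
    have : S * 2 = n * (n + 1) := hS2
    nlinarith [hS2]
  have hq4 : q = (r ^ 2 - 1) / 4 := hqdef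
  rw [hq4, div_pow]
  have h4 : (4 : ℝ) ^ S = 2 ^ (n ^ 2) * 2 ^ n := by
    rw [show (4 : ℝ) = 2 ^ 2 by norm_num, ← pow_mul, ← h2S, pow_add]
  rw [h4]
  have h1 : (2 : ℝ) ^ (n ^ 2) ≠ 0 := by positivity
  have h2 : (2 : ℝ) ^ n ≠ 0 := by positivity
  field_simp
end
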